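/- arXiv:2307.03568 — 4 statements merged into one kernel-verified Lean document; each statement's English description precedes it below -/
import Mathlib

section
/- Fix T > 0, a continuous T-periodic control u : ℝ → ℝ^m, a point x₀ ∈ Ω, and a solution x : [0,T] → Ω of the bilinear control system with control u and x(0) = x₀. Let Φ(t;s) denote the transfer matrix along (x, u). Suppose there are r, d > 0, a compact set K ⊆ Ω, and a map X assigning to each Δu ∈ Z with ‖Δu‖_Z < r a solution X(Δu) : [0,T] → Ω of the system with control u + Δu and X(Δu)(0) = x₀, such that X(Δu)(t) ∈ K and |X(Δu)(t) − x(t)| ≤ d·‖Δu‖_Z for all t ∈ [0,T], and X(0) = x. For Δu ∈ Z define z_{Δu}(t) := ∫₀ᵗ Φ(t;s)·( M(x(s)) + Df(u(s)) )·Δu(s) ds, where Df is the Jacobian of f. Then sup_{t∈[0,T]} |X(Δu)(t) − x(t) − z_{Δu}(t)| = o(‖Δu‖_Z) as Δu → 0 in Z; in particular, for each t ∈ [0,T], the map Δu ↦ X(Δu)(t) is Fréchet differentiable at 0 with derivative given by the bounded linear operator Δu ↦ z_{Δu}(t). -/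
open Set

/-- A solution of the bilinear control system `x' = f(u(t)) + M(x(t))·u(t)`
with state in `Ω`, on the set `I ⊆ ℝ`. -/
def IsBilinearSolutionOn {n m : ℕ}
    (f : (Fin m → ℝ) → (Fin n → ℝ))
    (M : (Fin n → ℝ) → ((Fin m → ℝ) →L[ℝ] (Fin n → ℝ)))
    (Ω : Set (Fin n → ℝ))
    (u : ℝ → (Fin m → ℝ)) (x : ℝ → (Fin n → ℝ)) (I : Set ℝ) : Prop :=
  ∀ t ∈ I, x t ∈ Ω ∧ HasDerivWithinAt x (f (u t) + M (x t) (u t)) I t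

section aux

variable {E F : Type*} [NormedAddCommGroup E] [NormedSpace ℝ E]
  [NormedAddCommGroup F] [NormedSpace ℝ F]

lemma hasDerivWithinAt_Ici_of_Icc {a b t : ℝ} {g : ℝ → F} {g' : F}
    (ht : t ∈ Ico a b) (h : HasDerivWithinAt g g' (Icc a b) t) :
    HasDerivWithinAt g g' (Ici t) t := by
  apply h.mono_of_mem_nhdsWithin
  rw [mem_nhdsWithin]
  exact ⟨Iio b, isOpen_Iio, ht.2, fun p hp => ⟨le_trans ht.1 hp.2, le_of_lt hp.1⟩⟩

/-- FTC within `Icc 0 T`. -/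
lemma ftc_icc [CompleteSpace F] {T : ℝ} {g : ℝ → F} (hg : ContinuousOn g (Icc 0 T))
    {t : ℝ} (ht : t ∈ Icc (0:ℝ) T) :
    HasDerivWithinAt (fun τ => ∫ s in (0:ℝ)..τ, g s) (g t) (Icc 0 T) t := by
  haveI : Fact (t ∈ Icc (0:ℝ) T) := ⟨ht⟩
  have hint : IntervalIntegrable g MeasureTheory.volume 0 t := by
    apply ContinuousOn.intervalIntegrable
    rw [uIcc_of_le ht.1]
    exact hg.mono (Icc_subset_Icc le_rfl ht.2)
  exact intervalIntegral.integral_hasDerivWithinAt_right hint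
    ⟨Icc 0 T, self_mem_nhdsWithin, hg.aestronglyMeasurable measurableSet_Icc⟩
    (hg t ht)

end aux

/-- The candidate derivative (variation-of-constants formula, in split form). -/
noncomputable def auxZ {n m : ℕ} {T : ℝ}
    (f : (Fin m → ℝ) → (Fin n → ℝ))
    (M : (Fin n → ℝ) → ((Fin m → ℝ) →L[ℝ] (Fin n → ℝ)))
    (u : C(AddCircle T, Fin m → ℝ)) (x : ℝ → (Fin n → ℝ))
    (Φ : ℝ → ℝ → ((Fin n → ℝ) →L[ℝ] (Fin n → ℝ)))
    (Δu : C(AddCircle T, Fin m → ℝ)) (τ : ℝ) : Fin n → ℝ :=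
  (Φ τ 0) (∫ s in (0:ℝ)..τ, (Φ 0 s) ((M (x s) + fderiv ℝ f (u s)) (Δu s)))


section aux2

variable {E F : Type*} [NormedAddCommGroup E] [NormedSpace ℝ E]
  [NormedAddCommGroup F] [NormedSpace ℝ F]

/-- Uniform first-order Taylor estimate for `C¹` maps on a neighborhood of a compact set. -/
lemma uniform_taylor [ProperSpace E] {g : E → F} {U : Set E} (hU : IsOpen U)
    (hg : ContDiffOn ℝ 1 g U) {C : Set E} (hC : IsCompact C) (hCU : C ⊆ U)
    {ε : ℝ} (hε : 0 < ε) :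
    ∃ δ > 0, ∀ a ∈ C, ∀ b, ‖b - a‖ < δ →
      ‖g b - g a - fderiv ℝ g a (b - a)‖ ≤ ε * ‖b - a‖ := by
  obtain ⟨ρ, hρ, hρU⟩ := hC.exists_cthickening_subset_open hU hCU
  have hdf : ContinuousOn (fderiv ℝ g) U := hg.continuousOn_fderiv_of_isOpen hU le_rfl
  have hunif : UniformContinuousOn (fderiv ℝ g) (Metric.cthickening ρ C) :=
    hC.cthickening.uniformContinuousOn_of_continuous (hdf.mono hρU)
  rw [Metric.uniformContinuousOn_iff] at hunif
  obtain ⟨δ', hδ', hδ'2⟩ := hunif ε hε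
  refine ⟨min δ' ρ, lt_min hδ' hρ, fun a ha b hb => ?_⟩
  have hball : Metric.ball a (min δ' ρ) ⊆ Metric.cthickening ρ C := by
    intro p hp
    exact Metric.mem_cthickening_of_dist_le p a ρ C ha
      (le_of_lt (lt_of_lt_of_le (Metric.mem_ball.1 hp) (min_le_right _ _)))
  have hconv : Convex ℝ (Metric.ball a (min δ' ρ)) := convex_ball _ _
  have key : ∀ p ∈ Metric.ball a (min δ' ρ),
      HasFDerivWithinAt g (fderiv ℝ g p) (Metric.ball a (min δ' ρ)) p := by
    intro p hp
    have hpU : p ∈ U := hρU (hball hp)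
    exact ((hg.differentiableOn one_ne_zero).differentiableAt
      (hU.mem_nhds hpU)).hasFDerivAt.hasFDerivWithinAt
  have bound : ∀ p ∈ Metric.ball a (min δ' ρ), ‖fderiv ℝ g p - fderiv ℝ g a‖ ≤ ε := by
    intro p hp
    have h1 : p ∈ Metric.cthickening ρ C := hball hp
    have h2 : a ∈ Metric.cthickening ρ C := hball (Metric.mem_ball_self (lt_min hδ' hρ))
    exact le_of_lt (by rw [← dist_eq_norm]; exact hδ'2 p h1 a h2 (lt_of_lt_of_le (Metric.mem_ball.1 hp) (min_le_left _ _)))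
  have hbmem : b ∈ Metric.ball a (min δ' ρ) := by
    rw [Metric.mem_ball, dist_eq_norm]; exact hb
  have hamem : a ∈ Metric.ball a (min δ' ρ) := Metric.mem_ball_self (lt_min hδ' hρ)
  exact hconv.norm_image_sub_le_of_norm_hasFDerivWithin_le' key bound hamem hbmem

end aux2

set_option maxHeartbeats 4000000 in
/-- Proposition 5 of the paper.  The solution of the bilinear
control system is Fréchet differentiable with respect to the (`T`-periodic
continuous) control at `u`, uniformly in `t ∈ [0,T]`, and the derivative is
given by the variation-of-constants formula
`Δu ↦ ∫₀ᵗ Φ(t;s)(M(x(s)) + Df(u(s)))Δu(s) ds`. -/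
theorem solution_fderiv_wrt_control
    {n m : ℕ} {T : ℝ} [hT : Fact (0 < T)]
    (f : (Fin m → ℝ) → (Fin n → ℝ)) (hf : ContDiff ℝ 1 f)
    (M : (Fin n → ℝ) → ((Fin m → ℝ) →L[ℝ] (Fin n → ℝ)))
    (Ω : Set (Fin n → ℝ)) (hΩ : IsOpen Ω) (hM : ContDiffOn ℝ 1 M Ω)
    (u : C(AddCircle T, Fin m → ℝ))
    (x₀ : Fin n → ℝ) (hx₀ : x₀ ∈ Ω)
    (x : ℝ → (Fin n → ℝ))
    (hx : IsBilinearSolutionOn f M Ω (fun t : ℝ => u t) x (Icc 0 T))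
    (hx0 : x 0 = x₀)
    -- the transfer matrix `Φ(t;s)` along `(x,u)`
    (Φ : ℝ → ℝ → ((Fin n → ℝ) →L[ℝ] (Fin n → ℝ)))
    (hΦinit : ∀ s ∈ Icc (0:ℝ) T, Φ s s = 1)
    (hΦode : ∀ s ∈ Icc (0:ℝ) T, ∀ t ∈ Icc (0:ℝ) T,
      HasDerivWithinAt (fun τ => Φ τ s)
        ((fderiv ℝ (fun y => M y (u t)) (x t)).comp (Φ t s)) (Icc 0 T) t)
    -- a family of perturbed solutions with the Lipschitz-in-control bound
    (r d : ℝ) (hr : 0 < r) (hd : 0 < d)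
    (K : Set (Fin n → ℝ)) (hK : IsCompact K) (hKΩ : K ⊆ Ω)
    (X : C(AddCircle T, Fin m → ℝ) → ℝ → (Fin n → ℝ))
    (hX0 : X 0 = x)
    (hX : ∀ Δu : C(AddCircle T, Fin m → ℝ), ‖Δu‖ < r →
      IsBilinearSolutionOn f M Ω (fun t : ℝ => u t + Δu t) (X Δu) (Icc 0 T) ∧
      X Δu 0 = x₀ ∧
      ∀ t ∈ Icc (0:ℝ) T, X Δu t ∈ K ∧ ‖X Δu t - x t‖ ≤ d * ‖Δu‖) :
    (∀ ε > 0, ∃ δ > 0, ∀ Δu : C(AddCircle T, Fin m → ℝ), ‖Δu‖ < δ →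
      ∀ t ∈ Icc (0:ℝ) T,
        ‖X Δu t - x t
          - ∫ s in (0:ℝ)..t, Φ t s (M (x s) (Δu s) + fderiv ℝ f (u s) (Δu s))‖
        ≤ ε * ‖Δu‖)
    ∧ ∀ t ∈ Icc (0:ℝ) T,
        ∃ L : C(AddCircle T, Fin m → ℝ) →L[ℝ] (Fin n → ℝ),
          (∀ Δu : C(AddCircle T, Fin m → ℝ),
            L Δu = ∫ s in (0:ℝ)..t, Φ t s (M (x s) (Δu s) + fderiv ℝ f (u s) (Δu s)))
          ∧ HasFDerivAt (fun Δu => X Δu t) L 0 := by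

  have hT0 : (0:ℝ) < T := hT.out
  have h0T : (0:ℝ) ∈ Icc (0:ℝ) T := ⟨le_rfl, hT0.le⟩
  have hxΩ : ∀ t ∈ Icc (0:ℝ) T, x t ∈ Ω := fun t ht => (hx t ht).1
  have hxc : ContinuousOn x (Icc 0 T) := fun t ht => ((hx t ht).2).continuousWithinAt
  have hucont : Continuous fun t : ℝ => u t :=
    u.continuous.comp (continuous_quotient_mk')
  -- the coefficient of the linearized equation
  have hA'Ac : ∀ t ∈ Icc (0:ℝ) T,
      fderiv ℝ (fun y => M y (u t)) (x t) = (fderiv ℝ M (x t)).flip (u t) := by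
    intro t ht
    have hMd : DifferentiableAt ℝ M (x t) :=
      (hM.differentiableOn one_ne_zero).differentiableAt (hΩ.mem_nhds (hxΩ t ht))
    have h1 := hMd.hasFDerivAt.clm_apply (hasFDerivAt_const (u t) (x t))
    simpa using h1.fderiv
  have hAc : ContinuousOn (fun t => (fderiv ℝ M (x t)).flip (u t)) (Icc 0 T) := by
    have h1 : ContinuousOn (fun t => (fderiv ℝ M (x t)).flip) (Icc 0 T) := by
      apply (ContinuousLinearMap.flipₗᵢ ℝ (Fin n → ℝ) (Fin m → ℝ)
        (Fin n → ℝ)).continuous.comp_continuousOn ?_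
      exact (hM.continuousOn_fderiv_of_isOpen hΩ le_rfl).comp hxc hxΩ
    exact h1.clm_apply hucont.continuousOn
  obtain ⟨CA, hCA⟩ := isCompact_Icc.exists_bound_of_continuousOn hAc
  set KA : ℝ := max CA 0 + 1 with hKAdef
  have hKApos : 0 < KA := by positivity
  have hKA : ∀ t ∈ Icc (0:ℝ) T, ‖(fderiv ℝ M (x t)).flip (u t)‖ ≤ KA := fun t ht =>
    (hCA t ht).trans (by simp [hKAdef]; nlinarith [le_max_left CA (0:ℝ)])
  -- the ODE for τ ↦ (Φ τ s).comp C
  have hODEcomp : ∀ s ∈ Icc (0:ℝ) T, ∀ C : (Fin n → ℝ) →L[ℝ] (Fin n → ℝ),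
      ∀ t ∈ Ico (0:ℝ) T, HasDerivWithinAt (fun τ => (Φ τ s).comp C)
        (((fderiv ℝ M (x t)).flip (u t)).comp ((Φ t s).comp C)) (Ici t) t := by
    intro s hs C t ht
    have h0 := hΦode s hs t (Ico_subset_Icc_self ht)
    have h1 := (((ContinuousLinearMap.compL ℝ (Fin n → ℝ) (Fin n → ℝ) (Fin n → ℝ)).flip
      C).hasFDerivAt).comp_hasDerivWithinAt t h0
    have h2 : HasDerivWithinAt (fun τ => (Φ τ s).comp C)
        (((fderiv ℝ (fun y => M y (u t)) (x t)).comp (Φ t s)).comp C) (Icc 0 T) t := by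
      exact h1
    rw [hA'Ac t (Ico_subset_Icc_self ht), ContinuousLinearMap.comp_assoc] at h2
    exact hasDerivWithinAt_Ici_of_Icc ht h2
  have hΦc : ∀ s ∈ Icc (0:ℝ) T, ContinuousOn (fun τ => Φ τ s) (Icc 0 T) :=
    fun s hs t ht => (hΦode s hs t ht).continuousWithinAt
  -- Lipschitz field
  have hvLip : ∀ τ : ℝ, LipschitzOnWith (Real.toNNReal KA)
      (fun Y : (Fin n → ℝ) →L[ℝ] (Fin n → ℝ) =>
        if τ ∈ Icc (0:ℝ) T then ((fderiv ℝ M (x τ)).flip (u τ)).comp Y else 0)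
      univ := by
    intro τ
    apply LipschitzOnWith.of_dist_le'
    intro Y _ Z _
    by_cases h : τ ∈ Icc (0:ℝ) T
    · simp only [if_pos h, dist_eq_norm, ← ContinuousLinearMap.comp_sub]
      calc ‖((fderiv ℝ M (x τ)).flip (u τ)).comp (Y - Z)‖
          ≤ ‖(fderiv ℝ M (x τ)).flip (u τ)‖ * ‖Y - Z‖ := ContinuousLinearMap.opNorm_comp_le _ _
        _ ≤ KA * ‖Y - Z‖ := by gcongr; exact hKA τ h
    · simp only [if_neg h, dist_eq_norm, sub_self, norm_zero]
      positivity
  -- the splitting identity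
  have hΦsplit : ∀ s ∈ Icc (0:ℝ) T, ∀ t ∈ Icc (0:ℝ) T,
      Φ t s = (Φ t 0).comp (Φ 0 s) := by
    intro s hs
    have key := ODE_solution_unique_of_mem_Icc_right (hv := fun τ _ => hvLip τ)
      (f := fun τ => Φ τ s) (g := fun τ => (Φ τ 0).comp (Φ 0 s))
      (a := 0) (b := T)
      (hΦc s hs)
      (by
        intro t ht
        rw [if_pos (Ico_subset_Icc_self ht)]
        have h0 := hΦode s hs t (Ico_subset_Icc_self ht)
        rw [hA'Ac t (Ico_subset_Icc_self ht)] at h0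
        exact hasDerivWithinAt_Ici_of_Icc ht h0)
      (fun _ _ => mem_univ _)
      (by exact (hΦc 0 h0T).clm_comp continuousOn_const)
      (by
        intro t ht
        rw [if_pos (Ico_subset_Icc_self ht)]
        exact hODEcomp 0 h0T (Φ 0 s) t ht)
      (fun _ _ => mem_univ _)
      (by simp [hΦinit 0 h0T, ContinuousLinearMap.one_def])
    intro t ht
    exact key ht
  -- invertibility
  have hunit : ∀ s ∈ Icc (0:ℝ) T,
      (Φ s 0).comp (Φ 0 s) = 1 ∧ (Φ 0 s).comp (Φ s 0) = 1 := by
    intro s hs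
    have h1 : (Φ s 0).comp (Φ 0 s) = 1 := (hΦsplit s hs s hs).symm.trans (hΦinit s hs)
    have h1' : (Φ s 0).toLinearMap * (Φ 0 s).toLinearMap = 1 := by
      have := congrArg ContinuousLinearMap.toLinearMap h1
      rwa [ContinuousLinearMap.toLinearMap_comp, ← Module.End.mul_eq_comp] at this
    have h2' := mul_eq_one_comm.mp h1'
    have h2 : (Φ 0 s).comp (Φ s 0) = 1 := by
      apply ContinuousLinearMap.coe_injective
      rw [ContinuousLinearMap.toLinearMap_comp, ← Module.End.mul_eq_comp, h2']
      rfl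
    exact ⟨h1, h2⟩
  have hinv : ∀ s ∈ Icc (0:ℝ) T, Ring.inverse (Φ s 0) = Φ 0 s := by
    intro s hs
    obtain ⟨h1, h2⟩ := hunit s hs
    have h1' : Φ s 0 * Φ 0 s = 1 := by rw [ContinuousLinearMap.mul_def]; exact h1
    have h2' : Φ 0 s * Φ s 0 = 1 := by rw [ContinuousLinearMap.mul_def]; exact h2
    exact Ring.inverse_unit ⟨Φ s 0, Φ 0 s, h1', h2'⟩
  have hΦ0c : ContinuousOn (fun s => Φ 0 s) (Icc 0 T) := by
    have hcont : ContinuousOn (fun s => Ring.inverse (Φ s 0)) (Icc 0 T) := by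
      intro s hs
      obtain ⟨h1, h2⟩ := hunit s hs
      have h1' : Φ s 0 * Φ 0 s = 1 := by rw [ContinuousLinearMap.mul_def]; exact h1
      have h2' : Φ 0 s * Φ s 0 = 1 := by rw [ContinuousLinearMap.mul_def]; exact h2
      have hu : ContinuousAt Ring.inverse (Φ s 0) :=
        NormedRing.inverse_continuousAt ⟨Φ s 0, Φ 0 s, h1', h2'⟩
      exact ContinuousAt.comp_continuousWithinAt (g := Ring.inverse)
        (f := fun τ => Φ τ 0) hu ((hΦc 0 h0T) s hs)
    exact hcont.congr fun s hs => (hinv s hs).symm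
  -- the coefficient of the inhomogeneous term
  have hBc : ContinuousOn (fun s => M (x s) + fderiv ℝ f (u s)) (Icc 0 T) :=
    (hM.continuousOn.comp hxc hxΩ).add
      ((hf.continuous_fderiv one_ne_zero).comp hucont).continuousOn
  have hgc : ∀ Δu : C(AddCircle T, Fin m → ℝ),
      ContinuousOn (fun s => (Φ 0 s) ((M (x s) + fderiv ℝ f (u s)) (Δu s))) (Icc 0 T) := by
    intro Δu
    apply hΦ0c.clm_apply
    exact hBc.clm_apply (Δu.continuous.comp continuous_quotient_mk').continuousOn
  have hgint : ∀ Δu : C(AddCircle T, Fin m → ℝ), ∀ t ∈ Icc (0:ℝ) T,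
      IntervalIntegrable (fun s => (Φ 0 s) ((M (x s) + fderiv ℝ f (u s)) (Δu s)))
        MeasureTheory.volume 0 t := by
    intro Δu t ht
    apply ContinuousOn.intervalIntegrable
    rw [uIcc_of_le ht.1]
    exact (hgc Δu).mono (Icc_subset_Icc le_rfl ht.2)
  have hZder : ∀ Δu : C(AddCircle T, Fin m → ℝ), ∀ t ∈ Icc (0:ℝ) T,
      HasDerivWithinAt (auxZ f M u x Φ Δu)
        (((fderiv ℝ M (x t)).flip (u t)) (auxZ f M u x Φ Δu t)
          + (M (x t) + fderiv ℝ f (u t)) (Δu t)) (Icc 0 T) t := by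
    intro Δu t ht
    have hw := ftc_icc (hgc Δu) ht
    have h1 := (hΦode 0 h0T t ht).clm_apply hw
    rw [hA'Ac t ht] at h1
    have e2 : (Φ t 0) ((Φ 0 t) ((M (x t) + fderiv ℝ f (u t)) (Δu t)))
        = (M (x t) + fderiv ℝ f (u t)) (Δu t) := by
      have h' : (Φ t 0).comp (Φ 0 t) = 1 := (hΦsplit t ht t ht).symm.trans (hΦinit t ht)
      calc (Φ t 0) ((Φ 0 t) ((M (x t) + fderiv ℝ f (u t)) (Δu t)))
          = ((Φ t 0).comp (Φ 0 t)) ((M (x t) + fderiv ℝ f (u t)) (Δu t)) := rfl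
        _ = (M (x t) + fderiv ℝ f (u t)) (Δu t) := by rw [h']; rfl
    show HasDerivWithinAt
      (fun τ => (Φ τ 0) (∫ s in (0:ℝ)..τ, (Φ 0 s) ((M (x s) + fderiv ℝ f (u s)) (Δu s)))) _ _ _
    rw [ContinuousLinearMap.comp_apply, e2] at h1
    exact h1
  have hZc : ∀ Δu : C(AddCircle T, Fin m → ℝ), ContinuousOn (auxZ f M u x Φ Δu) (Icc 0 T) :=
    fun Δu t ht => (hZder Δu t ht).continuousWithinAt
  have hZ0 : ∀ Δu : C(AddCircle T, Fin m → ℝ), auxZ f M u x Φ Δu 0 = 0 := by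
    intro Δu
    show (Φ 0 0) (∫ s in (0:ℝ)..(0:ℝ), (Φ 0 s) ((M (x s) + fderiv ℝ f (u s)) (Δu s))) = 0
    rw [intervalIntegral.integral_same]
    exact map_zero _
  have hZint : ∀ Δu : C(AddCircle T, Fin m → ℝ), ∀ t ∈ Icc (0:ℝ) T,
      (∫ s in (0:ℝ)..t, Φ t s (M (x s) (Δu s) + fderiv ℝ f (u s) (Δu s)))
        = auxZ f M u x Φ Δu t := by
    intro Δu t ht
    have h1 : EqOn (fun s => Φ t s (M (x s) (Δu s) + fderiv ℝ f (u s) (Δu s)))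
        (fun s => (Φ t 0) ((Φ 0 s) ((M (x s) + fderiv ℝ f (u s)) (Δu s)))) (uIcc (0:ℝ) t) := by
      intro s hs
      rw [uIcc_of_le ht.1] at hs
      have hs' : s ∈ Icc (0:ℝ) T := ⟨hs.1, hs.2.trans ht.2⟩
      show Φ t s (M (x s) (Δu s) + fderiv ℝ f (u s) (Δu s)) = _
      rw [hΦsplit s hs' t ht]
      rfl
    rw [intervalIntegral.integral_congr h1]
    show _ = (Φ t 0) _
    rw [← ContinuousLinearMap.intervalIntegral_comp_comm (Φ t 0) (hgint Δu t ht)]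
  -- linearity of `auxZ` in the control
  have hZadd : ∀ Δu Δv : C(AddCircle T, Fin m → ℝ), ∀ t ∈ Icc (0:ℝ) T,
      auxZ f M u x Φ (Δu + Δv) t = auxZ f M u x Φ Δu t + auxZ f M u x Φ Δv t := by
    intro Δu Δv t ht
    show (Φ t 0) _ = (Φ t 0) _ + (Φ t 0) _
    rw [← map_add]
    congr 1
    rw [← intervalIntegral.integral_add (hgint Δu t ht) (hgint Δv t ht)]
    apply intervalIntegral.integral_congr
    intro s _
    show (Φ 0 s) ((M (x s) + fderiv ℝ f (u s)) ((Δu + Δv) s)) = _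
    rw [ContinuousMap.add_apply, map_add, map_add]
  have hZsmul : ∀ (c : ℝ), ∀ Δu : C(AddCircle T, Fin m → ℝ), ∀ t ∈ Icc (0:ℝ) T,
      auxZ f M u x Φ (c • Δu) t = c • auxZ f M u x Φ Δu t := by
    intro c Δu t ht
    show (Φ t 0) _ = c • (Φ t 0) _
    rw [← map_smul]
    congr 1
    rw [← intervalIntegral.integral_smul]
    apply intervalIntegral.integral_congr
    intro s _
    show (Φ 0 s) ((M (x s) + fderiv ℝ f (u s)) ((c • Δu) s)) = _
    rw [ContinuousMap.smul_apply, map_smul, map_smul]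
  -- uniform bound for `auxZ`
  obtain ⟨CP₀, hCP₀⟩ := isCompact_Icc.exists_bound_of_continuousOn (hΦc 0 h0T)
  obtain ⟨CQ₀, hCQ₀⟩ := isCompact_Icc.exists_bound_of_continuousOn hΦ0c
  obtain ⟨CB₀, hCB₀⟩ := isCompact_Icc.exists_bound_of_continuousOn hBc
  set CP : ℝ := max CP₀ 0 + 1 with hCPdef
  set CQ : ℝ := max CQ₀ 0 + 1 with hCQdef
  set CB : ℝ := max CB₀ 0 + 1 with hCBdef
  have hCP : ∀ t ∈ Icc (0:ℝ) T, ‖Φ t 0‖ ≤ CP := fun t ht =>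
    (hCP₀ t ht).trans (by simp [hCPdef]; nlinarith [le_max_left CP₀ (0:ℝ)])
  have hCQ : ∀ t ∈ Icc (0:ℝ) T, ‖Φ 0 t‖ ≤ CQ := fun t ht =>
    (hCQ₀ t ht).trans (by simp [hCQdef]; nlinarith [le_max_left CQ₀ (0:ℝ)])
  have hCB : ∀ t ∈ Icc (0:ℝ) T, ‖M (x t) + fderiv ℝ f (u t)‖ ≤ CB := fun t ht =>
    (hCB₀ t ht).trans (by simp [hCBdef]; nlinarith [le_max_left CB₀ (0:ℝ)])
  have hCPpos : 0 < CP := by positivity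
  have hCQpos : 0 < CQ := by positivity
  have hCBpos : 0 < CB := by positivity
  have hZbound : ∀ Δu : C(AddCircle T, Fin m → ℝ), ∀ t ∈ Icc (0:ℝ) T,
      ‖auxZ f M u x Φ Δu t‖ ≤ (CP * (CQ * (CB * T))) * ‖Δu‖ := by
    intro Δu t ht
    have hIbound : ‖∫ s in (0:ℝ)..t, (Φ 0 s) ((M (x s) + fderiv ℝ f (u s)) (Δu s))‖
        ≤ CQ * CB * ‖Δu‖ * |t - 0| := by
      apply intervalIntegral.norm_integral_le_of_norm_le_const
      intro s hs
      rw [uIoc_of_le ht.1] at hs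
      have hs' : s ∈ Icc (0:ℝ) T := ⟨hs.1.le, hs.2.trans ht.2⟩
      calc ‖(Φ 0 s) ((M (x s) + fderiv ℝ f (u s)) (Δu s))‖
          ≤ ‖Φ 0 s‖ * ‖(M (x s) + fderiv ℝ f (u s)) (Δu s)‖ :=
            ContinuousLinearMap.le_opNorm _ _
        _ ≤ ‖Φ 0 s‖ * (‖M (x s) + fderiv ℝ f (u s)‖ * ‖Δu s‖) := by
            gcongr
            exact ContinuousLinearMap.le_opNorm _ _
        _ ≤ CQ * (CB * ‖Δu‖) := by
            gcongr
            · exact hCQ s hs'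
            · exact hCB s hs'
            · exact ContinuousMap.norm_coe_le_norm Δu s
        _ = CQ * CB * ‖Δu‖ := by ring
    show ‖(Φ t 0) (∫ s in (0:ℝ)..t, (Φ 0 s) ((M (x s) + fderiv ℝ f (u s)) (Δu s)))‖ ≤ _
    calc ‖(Φ t 0) (∫ s in (0:ℝ)..t, (Φ 0 s) ((M (x s) + fderiv ℝ f (u s)) (Δu s)))‖
        ≤ ‖Φ t 0‖ * ‖∫ s in (0:ℝ)..t, (Φ 0 s) ((M (x s) + fderiv ℝ f (u s)) (Δu s))‖ :=
          ContinuousLinearMap.le_opNorm _ _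
      _ ≤ CP * (CQ * CB * ‖Δu‖ * |t - 0|) :=
          mul_le_mul (hCP t ht) hIbound (norm_nonneg _) hCPpos.le
      _ ≤ CP * (CQ * CB * ‖Δu‖ * T) := by
          have habs : |t - 0| ≤ T := by
            rw [sub_zero, abs_of_nonneg ht.1]; exact ht.2
          gcongr
      _ = (CP * (CQ * (CB * T))) * ‖Δu‖ := by ring
  -- more constants
  have hDMc : ContinuousOn (fun s => fderiv ℝ M (x s)) (Icc 0 T) :=
    (hM.continuousOn_fderiv_of_isOpen hΩ le_rfl).comp hxc hxΩ
  obtain ⟨CDM₀, hCDM₀⟩ := isCompact_Icc.exists_bound_of_continuousOn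
    (E := (Fin n → ℝ) →L[ℝ] (Fin m → ℝ) →L[ℝ] (Fin n → ℝ)) hDMc
  set CDM : ℝ := max CDM₀ 0 with hCDMdef
  have hCDM0 : 0 ≤ CDM := le_max_right _ _
  have hCDM : ∀ s ∈ Icc (0:ℝ) T, ‖fderiv ℝ M (x s)‖ ≤ CDM := fun s hs =>
    (hCDM₀ s hs).trans (le_max_left _ _)
  have hxK : ∀ t ∈ Icc (0:ℝ) T, x t ∈ K := by
    intro t ht
    have h00 := (hX 0 (by simpa using hr)).2.2 t ht
    rw [hX0] at h00
    exact h00.1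
  -- the Gronwall constant
  set CG : ℝ := (Real.exp (KA * T) - 1) / KA with hCGdef
  have hCGpos : 0 < CG := by
    have h1 := Real.add_one_le_exp (KA * T)
    have h2 : 0 < KA * T := mul_pos hKApos hT0
    apply div_pos _ hKApos
    nlinarith
  have hgb : ∀ c : ℝ, 0 ≤ c → ∀ t ∈ Icc (0:ℝ) T,
      gronwallBound 0 KA c (t - 0) ≤ c * CG := by
    intro c hc t ht
    rw [gronwallBound_of_K_ne_0 (ne_of_gt hKApos)]
    have h1 : Real.exp (KA * (t - 0)) ≤ Real.exp (KA * T) := by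
      apply Real.exp_le_exp.mpr
      have := ht.2
      nlinarith [hKApos]
    have h2 : (1:ℝ) ≤ Real.exp (KA * (t - 0)) := by
      rw [← Real.exp_zero]
      apply Real.exp_le_exp.mpr
      nlinarith [ht.1, hKApos]
    calc 0 * Real.exp (KA * (t - 0)) + c / KA * (Real.exp (KA * (t - 0)) - 1)
        = c / KA * (Real.exp (KA * (t - 0)) - 1) := by ring
      _ ≤ c / KA * (Real.exp (KA * T) - 1) := by
          apply mul_le_mul_of_nonneg_left _ (by positivity)
          linarith
      _ = c * CG := by rw [hCGdef]; ring
  -- the key quantitative estimate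
  have main : ∀ ε : ℝ, 0 < ε → ∃ δ : ℝ, 0 < δ ∧ δ ≤ r ∧
      ∀ Δu : C(AddCircle T, Fin m → ℝ), ‖Δu‖ < δ → ∀ t ∈ Icc (0:ℝ) T,
        ‖X Δu t - x t - auxZ f M u x Φ Δu t‖ ≤ ε * ‖Δu‖ := by
    intro ε hε
    set ε' : ℝ := ε / CG with hε'def
    have hε'pos : 0 < ε' := div_pos hε hCGpos
    obtain ⟨δ₁, hδ₁pos, hδ₁⟩ := uniform_taylor isOpen_univ hf.contDiffOn
      (isCompact_range u.continuous) (subset_univ _) (show (0:ℝ) < ε'/3 by positivity)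
    set D2 : ℝ := d * (‖u‖ + 1) with hD2def
    have hD2pos : 0 < D2 := by positivity
    set ε₂ : ℝ := ε' / 3 / D2 with hε₂def
    have hε₂pos : 0 < ε₂ := by positivity
    obtain ⟨δ₂, hδ₂pos, hδ₂⟩ := uniform_taylor hΩ hM hK hKΩ hε₂pos
    set δ₃ : ℝ := ε' / 3 / (d * (ε₂ + CDM + 1)) with hδ₃def
    have hδ₃pos : 0 < δ₃ := by
      apply div_pos (by positivity)
      nlinarith [hε₂pos, hCDM0, hd]
    refine ⟨min r (min δ₁ (min (δ₂ / d) δ₃)), ?_, min_le_left _ _, ?_⟩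
    · have : 0 < δ₂ / d := div_pos hδ₂pos hd
      positivity
    intro Δu hΔu t ht
    have hΔur : ‖Δu‖ < r := lt_of_lt_of_le hΔu (min_le_left _ _)
    have hΔu1 : ‖Δu‖ < δ₁ :=
      lt_of_lt_of_le hΔu ((min_le_right _ _).trans (min_le_left _ _))
    have hΔu2 : ‖Δu‖ < δ₂ / d :=
      lt_of_lt_of_le hΔu ((min_le_right _ _).trans ((min_le_right _ _).trans (min_le_left _ _)))
    have hΔu3 : ‖Δu‖ < δ₃ :=
      lt_of_lt_of_le hΔu ((min_le_right _ _).trans ((min_le_right _ _).trans (min_le_right _ _)))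
    obtain ⟨hYsol, hY0, hYKb⟩ := hX Δu hΔur
    have hecont : ContinuousOn (fun τ => X Δu τ - x τ - auxZ f M u x Φ Δu τ) (Icc 0 T) :=
      (ContinuousOn.sub (fun τ hτ => ((hYsol τ hτ).2).continuousWithinAt) hxc).sub (hZc Δu)
    have he0 : X Δu 0 - x 0 - auxZ f M u x Φ Δu 0 = 0 := by
      rw [hY0, hx0, hZ0 Δu]
      simp
    have hR : ∀ τ ∈ Ico (0:ℝ) T,
        HasDerivWithinAt (fun σ => X Δu σ - x σ - auxZ f M u x Φ Δu σ)
          (((fderiv ℝ M (x τ)).flip (u τ)) (X Δu τ - x τ - auxZ f M u x Φ Δu τ) +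
            ((f (u τ + Δu τ) - f (u τ) - fderiv ℝ f (u τ) (Δu τ))
              + ((M (X Δu τ) - M (x τ) - fderiv ℝ M (x τ) (X Δu τ - x τ)) (u τ))
              + ((M (X Δu τ) - M (x τ)) (Δu τ)))) (Ici τ) τ := by
      intro τ hτ
      have hτ' := Ico_subset_Icc_self hτ
      have h1 := (((hYsol τ hτ').2).sub ((hx τ hτ').2)).sub (hZder Δu τ hτ')
      apply hasDerivWithinAt_Ici_of_Icc hτ
      refine h1.congr_deriv ?_
      simp only [ContinuousLinearMap.add_apply, ContinuousLinearMap.sub_apply,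
        ContinuousLinearMap.flip_apply, map_add, map_sub]
      abel
    have hbound : ∀ τ ∈ Ico (0:ℝ) T,
        ‖((fderiv ℝ M (x τ)).flip (u τ)) (X Δu τ - x τ - auxZ f M u x Φ Δu τ) +
            ((f (u τ + Δu τ) - f (u τ) - fderiv ℝ f (u τ) (Δu τ))
              + ((M (X Δu τ) - M (x τ) - fderiv ℝ M (x τ) (X Δu τ - x τ)) (u τ))
              + ((M (X Δu τ) - M (x τ)) (Δu τ)))‖
          ≤ KA * ‖X Δu τ - x τ - auxZ f M u x Φ Δu τ‖ + ε' * ‖Δu‖ := by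
      intro τ hτ
      have hτ' := Ico_subset_Icc_self hτ
      have hyx : ‖X Δu τ - x τ‖ ≤ d * ‖Δu‖ := (hYKb τ hτ').2
      have hxτK : x τ ∈ K := hxK τ hτ'
      have hT1 : ‖f (u τ + Δu τ) - f (u τ) - fderiv ℝ f (u τ) (Δu τ)‖ ≤ ε'/3 * ‖Δu‖ := by
        have h1 := hδ₁ (u τ) (mem_range_self _) (u τ + Δu τ) (by
          rw [add_sub_cancel_left]
          exact lt_of_le_of_lt (ContinuousMap.norm_coe_le_norm Δu τ) hΔu1)
        rw [add_sub_cancel_left] at h1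
        calc ‖f (u τ + Δu τ) - f (u τ) - fderiv ℝ f (u τ) (Δu τ)‖
            ≤ ε'/3 * ‖Δu τ‖ := h1
          _ ≤ ε'/3 * ‖Δu‖ := by
              apply mul_le_mul_of_nonneg_left (ContinuousMap.norm_coe_le_norm Δu τ)
              positivity
      have hTM : ‖M (X Δu τ) - M (x τ) - fderiv ℝ M (x τ) (X Δu τ - x τ)‖
          ≤ ε₂ * ‖X Δu τ - x τ‖ := by
        apply hδ₂ (x τ) hxτK (X Δu τ)
        calc ‖X Δu τ - x τ‖ ≤ d * ‖Δu‖ := hyx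
          _ < d * (δ₂ / d) := by
              apply mul_lt_mul_of_pos_left hΔu2 hd
          _ = δ₂ := by field_simp
      have hT2 : ‖(M (X Δu τ) - M (x τ) - fderiv ℝ M (x τ) (X Δu τ - x τ)) (u τ)‖
          ≤ ε'/3 * ‖Δu‖ := by
        have hstep : ε₂ * D2 = ε'/3 := div_mul_cancel₀ _ (ne_of_gt hD2pos)
        calc ‖(M (X Δu τ) - M (x τ) - fderiv ℝ M (x τ) (X Δu τ - x τ)) (u τ)‖
            ≤ ‖M (X Δu τ) - M (x τ) - fderiv ℝ M (x τ) (X Δu τ - x τ)‖ * ‖u τ‖ :=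
              ContinuousLinearMap.le_opNorm _ _
          _ ≤ (ε₂ * (d * ‖Δu‖)) * (‖u‖ + 1) := by
              apply mul_le_mul _ _ (norm_nonneg _) (by positivity)
              · exact hTM.trans (mul_le_mul_of_nonneg_left hyx hε₂pos.le)
              · exact (ContinuousMap.norm_coe_le_norm u τ).trans (by linarith)
          _ = ε₂ * D2 * ‖Δu‖ := by rw [hD2def]; ring
          _ = ε'/3 * ‖Δu‖ := by rw [hstep]
      have hT3 : ‖(M (X Δu τ) - M (x τ)) (Δu τ)‖ ≤ ε'/3 * ‖Δu‖ := by
        have hMyx : ‖M (X Δu τ) - M (x τ)‖ ≤ (ε₂ + CDM) * (d * ‖Δu‖) := by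
          have h1 : ‖M (X Δu τ) - M (x τ)‖
              ≤ ‖M (X Δu τ) - M (x τ) - fderiv ℝ M (x τ) (X Δu τ - x τ)‖
                + ‖fderiv ℝ M (x τ) (X Δu τ - x τ)‖ := by
            calc ‖M (X Δu τ) - M (x τ)‖
                = ‖(M (X Δu τ) - M (x τ) - fderiv ℝ M (x τ) (X Δu τ - x τ))
                    + fderiv ℝ M (x τ) (X Δu τ - x τ)‖ := by rw [sub_add_cancel]
              _ ≤ _ := norm_add_le _ _
          have h2 : ‖fderiv ℝ M (x τ) (X Δu τ - x τ)‖ ≤ CDM * ‖X Δu τ - x τ‖ :=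
            (ContinuousLinearMap.le_opNorm _ _).trans
              (mul_le_mul_of_nonneg_right (hCDM τ hτ') (norm_nonneg _))
          calc ‖M (X Δu τ) - M (x τ)‖
              ≤ ε₂ * ‖X Δu τ - x τ‖ + CDM * ‖X Δu τ - x τ‖ :=
                h1.trans (add_le_add hTM h2)
            _ = (ε₂ + CDM) * ‖X Δu τ - x τ‖ := by ring
            _ ≤ (ε₂ + CDM) * (d * ‖Δu‖) := by
                apply mul_le_mul_of_nonneg_left hyx
                nlinarith [hε₂pos, hCDM0]
        have hA4 : (ε₂ + CDM) * (d * δ₃) ≤ ε'/3 := by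
          have hXG : (ε₂ + CDM) * d ≤ d * (ε₂ + CDM + 1) := by nlinarith [hd, hCDM0, hε₂pos]
          have hGpos : 0 < d * (ε₂ + CDM + 1) := by nlinarith [hd, hCDM0, hε₂pos]
          calc (ε₂ + CDM) * (d * δ₃)
              = (ε'/3) * (((ε₂ + CDM) * d) / (d * (ε₂ + CDM + 1))) := by
                rw [hδ₃def]; ring
            _ ≤ (ε'/3) * 1 := by
                apply mul_le_mul_of_nonneg_left _ (by positivity)
                exact (div_le_one hGpos).mpr hXG
            _ = ε'/3 := mul_one _
        calc ‖(M (X Δu τ) - M (x τ)) (Δu τ)‖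
            ≤ ‖M (X Δu τ) - M (x τ)‖ * ‖Δu τ‖ := ContinuousLinearMap.le_opNorm _ _
          _ ≤ ((ε₂ + CDM) * (d * ‖Δu‖)) * ‖Δu‖ := by
              apply mul_le_mul hMyx (ContinuousMap.norm_coe_le_norm Δu τ) (norm_nonneg _)
              exact mul_nonneg (add_nonneg hε₂pos.le hCDM0) (mul_nonneg hd.le (norm_nonneg _))
          _ ≤ ((ε₂ + CDM) * (d * δ₃)) * ‖Δu‖ := by
              apply mul_le_mul_of_nonneg_right _ (norm_nonneg _)
              apply mul_le_mul_of_nonneg_left _ (by nlinarith [hε₂pos, hCDM0])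
              exact mul_le_mul_of_nonneg_left hΔu3.le hd.le
          _ ≤ ε'/3 * ‖Δu‖ := mul_le_mul_of_nonneg_right hA4 (norm_nonneg _)
      have hAe : ‖((fderiv ℝ M (x τ)).flip (u τ)) (X Δu τ - x τ - auxZ f M u x Φ Δu τ)‖
          ≤ KA * ‖X Δu τ - x τ - auxZ f M u x Φ Δu τ‖ :=
        (ContinuousLinearMap.le_opNorm _ _).trans
          (mul_le_mul_of_nonneg_right (hKA τ hτ') (norm_nonneg _))
      calc ‖((fderiv ℝ M (x τ)).flip (u τ)) (X Δu τ - x τ - auxZ f M u x Φ Δu τ) +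
            ((f (u τ + Δu τ) - f (u τ) - fderiv ℝ f (u τ) (Δu τ))
              + ((M (X Δu τ) - M (x τ) - fderiv ℝ M (x τ) (X Δu τ - x τ)) (u τ))
              + ((M (X Δu τ) - M (x τ)) (Δu τ)))‖
          ≤ ‖((fderiv ℝ M (x τ)).flip (u τ)) (X Δu τ - x τ - auxZ f M u x Φ Δu τ)‖ +
            (‖f (u τ + Δu τ) - f (u τ) - fderiv ℝ f (u τ) (Δu τ)‖
              + ‖(M (X Δu τ) - M (x τ) - fderiv ℝ M (x τ) (X Δu τ - x τ)) (u τ)‖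
              + ‖(M (X Δu τ) - M (x τ)) (Δu τ)‖) := by
            apply (norm_add_le _ _).trans
            gcongr
            exact (norm_add_le _ _).trans (by gcongr; exact norm_add_le _ _)
        _ ≤ KA * ‖X Δu τ - x τ - auxZ f M u x Φ Δu τ‖ + (ε'/3 * ‖Δu‖ + ε'/3 * ‖Δu‖ + ε'/3 * ‖Δu‖) := by
            exact add_le_add hAe (add_le_add (add_le_add hT1 hT2) hT3)
        _ = KA * ‖X Δu τ - x τ - auxZ f M u x Φ Δu τ‖ + ε' * ‖Δu‖ := by ring
    have hgron := norm_le_gronwallBound_of_norm_deriv_right_le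
      (f := fun τ => X Δu τ - x τ - auxZ f M u x Φ Δu τ)
      (f' := fun τ => ((fderiv ℝ M (x τ)).flip (u τ)) (X Δu τ - x τ - auxZ f M u x Φ Δu τ) +
        ((f (u τ + Δu τ) - f (u τ) - fderiv ℝ f (u τ) (Δu τ))
          + ((M (X Δu τ) - M (x τ) - fderiv ℝ M (x τ) (X Δu τ - x τ)) (u τ))
          + ((M (X Δu τ) - M (x τ)) (Δu τ))))
      (δ := 0) (K := KA) (ε := ε' * ‖Δu‖) (a := 0) (b := T)
      hecont hR
      (by
        show ‖X Δu 0 - x 0 - auxZ f M u x Φ Δu 0‖ ≤ 0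
        rw [he0]; simp)
      hbound t ht
    calc ‖X Δu t - x t - auxZ f M u x Φ Δu t‖
        ≤ gronwallBound 0 KA (ε' * ‖Δu‖) (t - 0) := hgron
      _ ≤ (ε' * ‖Δu‖) * CG := hgb _ (by positivity) t ht
      _ = ε * ‖Δu‖ := by
          rw [hε'def]
          field_simp
  constructor
  · intro ε hε
    obtain ⟨δ, hδpos, hδr, hmain⟩ := main ε hε
    refine ⟨δ, hδpos, fun Δu hΔu t ht => ?_⟩
    rw [hZint Δu t ht]
    exact hmain Δu hΔu t ht
  · intro t ht
    set Llin : C(AddCircle T, Fin m → ℝ) →ₗ[ℝ] (Fin n → ℝ) :=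
      { toFun := fun Δu => auxZ f M u x Φ Δu t,
        map_add' := fun a b => hZadd a b t ht,
        map_smul' := fun c a => hZsmul c a t ht } with hLlindef
    refine ⟨Llin.mkContinuous (CP * (CQ * (CB * T))) (fun Δu => hZbound Δu t ht),
      fun Δu => ?_, ?_⟩
    · show auxZ f M u x Φ Δu t = _
      exact (hZint Δu t ht).symm
    · rw [hasFDerivAt_iff_isLittleO_nhds_zero, Asymptotics.isLittleO_iff]
      intro c hc
      obtain ⟨δ, hδpos, hδr, hmain⟩ := main c hc
      filter_upwards [Metric.ball_mem_nhds (0 : C(AddCircle T, Fin m → ℝ)) hδpos] with Δu hΔu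
      rw [mem_ball_zero_iff] at hΔu
      have h1 := hmain Δu hΔu t ht
      have h2 : X (0 + Δu) t - X 0 t
          - (Llin.mkContinuous (CP * (CQ * (CB * T))) (fun Δv => hZbound Δv t ht)) Δu
          = X Δu t - x t - auxZ f M u x Φ Δu t := by
        rw [zero_add, hX0]
        rfl
      rw [h2]
      exact h1
end

section
/- Let T > 0 and let D be a set of pairs (u, x₀) with u ∈ Z and x₀ ∈ Ω, equipped with a map assigning to each (u,x₀) ∈ D a solution x(·;u,x₀) : [0,T] → Ω of the bilinear control system with control u and x(0;u,x₀) = x₀. Assume: (i) there is a compact set K ⊆ Ω with x(t;u,x₀) ∈ K for all (u,x₀) ∈ D and t ∈ [0,T]; (ii) there is d > 0 with |x(t;u,x₀) − x(t;ũ,x̃₀)| ≤ d·( |x₀ − x̃₀| + ‖u − ũ‖_Z ) for all (u,x₀),(ũ,x̃₀) ∈ D and t ∈ [0,T]; (iii) there is d̂ > 0 with ‖Φ_{u,x₀}(t;s)‖ ≤ d̂ for all (u,x₀) ∈ D and 0 ≤ s ≤ t ≤ T, where Φ_{u,x₀} is the transfer matrix along (x(·;u,x₀), u); and (iv) the components u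 of pairs in D take values in a fixed compact subset of ℝ^m. For (u,x₀) ∈ D and t ∈ [0,T], let B(t;u,x₀) ∈ B(Z,ℝ^n) be the bounded linear operator Δu ↦ ∫₀ᵗ Φ_{u,x₀}(t;s)·( M(x(s;u,x₀)) + Df(u(s)) )·Δu(s) ds. Then for every (u,x₀) ∈ D, sup_{t∈[0,T]} ‖B(t;ũ,x̃₀) − B(t;u,x₀)‖_{B(Z,ℝ^n)} → 0 as (ũ,x̃₀) → (u,x₀) within D (with respect to ‖·‖_Z on controls and the Euclidean norm on initial points). -/
open Set

lemma aux_flip_apply_norm_le {E F G : Type*} [NormedAddCommGroup E] [NormedSpace ℝ E]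
    [NormedAddCommGroup F] [NormedSpace ℝ F] [NormedAddCommGroup G] [NormedSpace ℝ G]
    (A : E →L[ℝ] F →L[ℝ] G) (v : F) : ‖A.flip v‖ ≤ ‖A‖ * ‖v‖ := by
  calc ‖A.flip v‖ ≤ ‖A.flip‖ * ‖v‖ := A.flip.le_opNorm v
    _ = ‖A‖ * ‖v‖ := by rw [ContinuousLinearMap.opNorm_flip]

lemma aux_flip_sub_apply {E F G : Type*} [NormedAddCommGroup E] [NormedSpace ℝ E]
    [NormedAddCommGroup F] [NormedSpace ℝ F] [NormedAddCommGroup G] [NormedSpace ℝ G]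
    (A B : E →L[ℝ] F →L[ℝ] G) (v : F) : A.flip v - B.flip v = (A - B).flip v := by
  ext w; simp

lemma aux_gronwall {E : Type*} [NormedAddCommGroup E] [NormedSpace ℝ E]
    {g g' : ℝ → E} {a b L η δ : ℝ} (hL : 0 < L) (hη : 0 ≤ η) (hδ : 0 ≤ δ)
    (hderiv : ∀ t ∈ Icc a b, HasDerivWithinAt g (g' t) (Icc a b) t)
    (hbound : ∀ t ∈ Icc a b, ‖g' t‖ ≤ L * ‖g t‖ + η)
    (ha : ‖g a‖ ≤ δ) :
    ∀ t ∈ Icc a b, ‖g t‖ ≤ (δ + η * (b - a)) * Real.exp (L * (b - a)) := by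
  have hcont : ContinuousOn g (Icc a b) := fun s hs => (hderiv s hs).continuousWithinAt
  have key := norm_le_gronwallBound_of_norm_deriv_right_le hcont
    (fun s hs => (hderiv s (Ico_subset_Icc_self hs)).mono_of_mem_nhdsWithin
      (Icc_mem_nhdsGE_of_mem hs))
    ha (fun s hs => hbound s (Ico_subset_Icc_self hs))
  intro t ht
  refine (key t ht).trans ?_
  rw [gronwallBound_of_K_ne_0 hL.ne']
  have hta : 0 ≤ t - a := sub_nonneg.2 ht.1
  have htb : t - a ≤ b - a := by linarith [ht.2]
  have h1 : Real.exp (L * (t - a)) ≤ Real.exp (L * (b - a)) := by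
    apply Real.exp_le_exp.2; nlinarith
  have h4 := Real.exp_pos (L * (t - a))
  have h2 : Real.exp (L * (t - a)) - 1 ≤ L * (t - a) * Real.exp (L * (t - a)) := by
    have h3 := Real.add_one_le_exp (-(L * (t - a)))
    rw [Real.exp_neg] at h3
    have h5 : (1 - L * (t - a)) * Real.exp (L * (t - a)) ≤ 1 := by
      nlinarith [mul_le_mul_of_nonneg_right h3 h4.le, mul_inv_cancel₀ h4.ne']
    nlinarith
  have h6 : η / L * (Real.exp (L * (t - a)) - 1) ≤ η * ((t - a) * Real.exp (L * (t - a))) := by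
    rw [div_mul_eq_mul_div, div_le_iff₀ hL]
    nlinarith [mul_le_mul_of_nonneg_left h2 hη]
  have h7 : (t - a) * Real.exp (L * (t - a)) ≤ (b - a) * Real.exp (L * (b - a)) :=
    mul_le_mul htb h1 h4.le (by linarith)
  calc δ * Real.exp (L * (t - a)) + η / L * (Real.exp (L * (t - a)) - 1)
      ≤ δ * Real.exp (L * (b - a)) + η * ((b - a) * Real.exp (L * (b - a))) := by
        refine add_le_add (mul_le_mul_of_nonneg_left h1 hδ) ?_
        exact h6.trans (mul_le_mul_of_nonneg_left h7 hη)
    _ = (δ + η * (b - a)) * Real.exp (L * (b - a)) := by ring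

set_option maxHeartbeats 1600000 in
/-- Proposition 6 of the paper.  Under the uniform
compactness, Lipschitz-in-data, and transfer-matrix bounds (i)–(iv), the
control-sensitivity operator
`B(t;u,x₀) : Δu ↦ ∫₀ᵗ Φ_{u,x₀}(t;s)(M(x(s;u,x₀)) + Df(u(s)))Δu(s) ds`
is continuous in the data `(u,x₀) ∈ D`, uniformly in `t ∈ [0,T]`. -/
theorem control_sensitivity_operator_continuous
    {n m : ℕ} {T : ℝ} [hT : Fact (0 < T)]
    (f : (Fin m → ℝ) → (Fin n → ℝ)) (hf : ContDiff ℝ 1 f)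
    (M : (Fin n → ℝ) → ((Fin m → ℝ) →L[ℝ] (Fin n → ℝ)))
    (Ω : Set (Fin n → ℝ)) (hΩ : IsOpen Ω) (hM : ContDiffOn ℝ 1 M Ω)
    (D : Set (C(AddCircle T, Fin m → ℝ) × (Fin n → ℝ)))
    -- the family of solutions indexed by the data `(u, x₀) ∈ D`
    (x : C(AddCircle T, Fin m → ℝ) → (Fin n → ℝ) → ℝ → (Fin n → ℝ))
    (hsol : ∀ p ∈ D,
      IsBilinearSolutionOn f M Ω (fun t : ℝ => p.1 t) (x p.1 p.2) (Icc 0 T) ∧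
      x p.1 p.2 0 = p.2)
    -- (i) uniform compactness of the trajectories
    (K : Set (Fin n → ℝ)) (hK : IsCompact K) (hKΩ : K ⊆ Ω)
    (hxK : ∀ p ∈ D, ∀ t ∈ Icc (0:ℝ) T, x p.1 p.2 t ∈ K)
    -- (ii) Lipschitz dependence on the data
    (d : ℝ) (hd : 0 < d)
    (hLip : ∀ p ∈ D, ∀ q ∈ D, ∀ t ∈ Icc (0:ℝ) T,
      ‖x p.1 p.2 t - x q.1 q.2 t‖ ≤ d * (‖p.2 - q.2‖ + ‖p.1 - q.1‖))
    -- (iii) transfer matrices with a uniform bound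
    (Φ : C(AddCircle T, Fin m → ℝ) → (Fin n → ℝ) → ℝ → ℝ →
      ((Fin n → ℝ) →L[ℝ] (Fin n → ℝ)))
    (hΦinit : ∀ p ∈ D, ∀ s ∈ Icc (0:ℝ) T, Φ p.1 p.2 s s = 1)
    (hΦode : ∀ p ∈ D, ∀ s ∈ Icc (0:ℝ) T, ∀ t ∈ Icc (0:ℝ) T,
      HasDerivWithinAt (fun τ => Φ p.1 p.2 τ s)
        ((fderiv ℝ (fun y => M y (p.1 t)) (x p.1 p.2 t)).comp (Φ p.1 p.2 t s))
        (Icc 0 T) t)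
    (dhat : ℝ) (hdhat : 0 < dhat)
    (hΦbound : ∀ p ∈ D, ∀ s t : ℝ, 0 ≤ s → s ≤ t → t ≤ T →
      ‖Φ p.1 p.2 t s‖ ≤ dhat)
    -- (iv) controls take values in a fixed compact set
    (Kc : Set (Fin m → ℝ)) (hKc : IsCompact Kc)
    (huKc : ∀ p ∈ D, ∀ t : ℝ, p.1 t ∈ Kc)
    -- the control-sensitivity operators, characterized by their action
    (B : C(AddCircle T, Fin m → ℝ) → (Fin n → ℝ) → ℝ →
      (C(AddCircle T, Fin m → ℝ) →L[ℝ] (Fin n → ℝ)))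
    (hB : ∀ p ∈ D, ∀ t ∈ Icc (0:ℝ) T, ∀ Δu : C(AddCircle T, Fin m → ℝ),
      B p.1 p.2 t Δu
        = ∫ s in (0:ℝ)..t,
            Φ p.1 p.2 t s (M (x p.1 p.2 s) (Δu s) + fderiv ℝ f (p.1 s) (Δu s))) :
    ∀ p ∈ D, ∀ ε > 0, ∃ δ > 0, ∀ q ∈ D,
      ‖q.1 - p.1‖ < δ → ‖q.2 - p.2‖ < δ →
      ∀ t ∈ Icc (0:ℝ) T, ‖B q.1 q.2 t - B p.1 p.2 t‖ ≤ ε := by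
  have hT0 : (0:ℝ) < T := hT.out
  intro p hp ε hε
  have h0T : (0:ℝ) ∈ Icc (0:ℝ) T := ⟨le_refl _, hT0.le⟩
  have hMdiff : ∀ y ∈ Ω, DifferentiableAt ℝ M y := fun y hy =>
    (hM.differentiableOn one_ne_zero).differentiableAt (hΩ.mem_nhds hy)
  have hDMcont : ContinuousOn (fun y => fderiv ℝ M y) Ω :=
    hM.continuousOn_fderiv_of_isOpen hΩ le_rfl
  have hJeq : ∀ y ∈ Ω, ∀ v : Fin m → ℝ,
      fderiv ℝ (fun z => M z v) y = (fderiv ℝ M y).flip v := by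
    intro y hy v
    have h1 := fderiv_clm_apply (c := M) (u := fun _ => v) (hMdiff y hy)
      (differentiableAt_const v)
    simpa using h1
  obtain ⟨CM, hCM⟩ := hK.exists_bound_of_continuousOn (f := fun y => fderiv ℝ M y) (hDMcont.mono hKΩ)
  obtain ⟨C0, hC0⟩ := hK.exists_bound_of_continuousOn (hM.continuousOn.mono hKΩ)
  have hDfc : Continuous (fderiv ℝ f) := hf.continuous_fderiv one_ne_zero
  obtain ⟨Cf, hCf⟩ := hKc.exists_bound_of_continuousOn hDfc.continuousOn
  obtain ⟨Ru, hRu'⟩ := hKc.exists_bound_of_continuousOn continuous_id.continuousOn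
  have hRu : ∀ v ∈ Kc, ‖v‖ ≤ Ru := fun v hv => by simpa using hRu' v hv
  have hCM0 : 0 ≤ CM := (norm_nonneg _).trans (hCM _ (hxK p hp 0 h0T))
  have hC00 : 0 ≤ C0 := (norm_nonneg _).trans (hC0 _ (hxK p hp 0 h0T))
  have hCf0 : 0 ≤ Cf := (norm_nonneg _).trans (hCf _ (huKc p hp 0))
  have hRu0 : 0 ≤ Ru := (norm_nonneg _).trans (hRu _ (huKc p hp 0))
  set L : ℝ := CM * Ru + 1 with hLdef
  have hL : 0 < L := by positivity
  -- uniform bound on the Jacobians J r t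
  have hJb : ∀ r ∈ D, ∀ s ∈ Icc (0:ℝ) T,
      ‖fderiv ℝ (fun y => M y (r.1 s)) (x r.1 r.2 s)‖ ≤ L := by
    intro r hr s hs
    rw [hJeq _ (hKΩ (hxK r hr s hs)) _]
    refine (aux_flip_apply_norm_le _ _).trans ?_
    have h1 := mul_le_mul (hCM _ (hxK r hr s hs)) (hRu _ (huKc r hr s))
      (norm_nonneg _) hCM0
    rw [hLdef]; linarith
  have hxcont : ∀ r ∈ D, ContinuousOn (x r.1 r.2) (Icc 0 T) :=
    fun r hr s hs => (((hsol r hr).1 s hs).2).continuousWithinAt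
  -- continuity of Φ in its second (initial-time) variable
  have hΦcont : ∀ r ∈ D, ∀ t ∈ Icc (0:ℝ) T,
      ContinuousOn (fun s => Φ r.1 r.2 t s) (Icc 0 t) := by
    intro r hr t ht
    have hC'0 : 0 ≤ L * dhat * Real.exp (L * T) := by positivity
    have key : ∀ s ∈ Icc (0:ℝ) t, ∀ s' ∈ Icc (0:ℝ) t, s ≤ s' →
        ‖Φ r.1 r.2 t s - Φ r.1 r.2 t s'‖
          ≤ (L * dhat * Real.exp (L * T)) * (s' - s) := by
      intro s hs s' hs' hss'
      have hsT : s ∈ Icc (0:ℝ) T := ⟨hs.1, hs.2.trans ht.2⟩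
      have hs'T : s' ∈ Icc (0:ℝ) T := ⟨hs'.1, hs'.2.trans ht.2⟩
      -- mean value inequality on [s, s']
      have hmvi := norm_image_sub_le_of_norm_deriv_le_segment'
        (f := fun τ => Φ r.1 r.2 τ s)
        (f' := fun τ => ((fderiv ℝ (fun y => M y (r.1 τ)) (x r.1 r.2 τ)).comp
          (Φ r.1 r.2 τ s)))
        (a := s) (b := s') (C := L * dhat)
        (fun τ hτ => (hΦode r hr s hsT τ ⟨hs.1.trans hτ.1, hτ.2.trans hs'T.2⟩).mono
          (Icc_subset_Icc hs.1 (hs'T.2)))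
        (fun τ hτ => by
          refine (ContinuousLinearMap.opNorm_comp_le _ _).trans ?_
          have hτT : τ ∈ Icc (0:ℝ) T := ⟨hs.1.trans hτ.1, hτ.2.le.trans hs'T.2⟩
          exact mul_le_mul (hJb r hr τ hτT)
            (hΦbound r hr s τ hs.1 hτ.1 hτT.2) (norm_nonneg _) hL.le)
        s' (right_mem_Icc.2 hss')
      have hmvi' : ‖Φ r.1 r.2 s' s - 1‖ ≤ L * dhat * (s' - s) := by
        simpa [hΦinit r hr s hsT] using hmvi
      -- Gronwall on [s', T] for the two solutions τ ↦ Φ(τ,s) and τ ↦ Φ(τ,s')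
      have hsub : Icc s' T ⊆ Icc (0:ℝ) T := Icc_subset_Icc hs'.1 le_rfl
      have hg := aux_gronwall
        (g := fun τ => Φ r.1 r.2 τ s - Φ r.1 r.2 τ s')
        (g' := fun τ =>
          ((fderiv ℝ (fun y => M y (r.1 τ)) (x r.1 r.2 τ)).comp (Φ r.1 r.2 τ s))
          - ((fderiv ℝ (fun y => M y (r.1 τ)) (x r.1 r.2 τ)).comp (Φ r.1 r.2 τ s')))
        (a := s') (b := T) (L := L) (η := 0) (δ := L * dhat * (s' - s))
        hL le_rfl (mul_nonneg (by positivity) (by linarith))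
        (fun τ hτ => ((hΦode r hr s hsT τ (hsub hτ)).sub
          (hΦode r hr s' hs'T τ (hsub hτ))).mono hsub)
        (fun τ hτ => by
          have e1 : ((fderiv ℝ (fun y => M y (r.1 τ)) (x r.1 r.2 τ)).comp (Φ r.1 r.2 τ s))
              - ((fderiv ℝ (fun y => M y (r.1 τ)) (x r.1 r.2 τ)).comp (Φ r.1 r.2 τ s'))
              = (fderiv ℝ (fun y => M y (r.1 τ)) (x r.1 r.2 τ)).comp
                (Φ r.1 r.2 τ s - Φ r.1 r.2 τ s') := by
            rw [ContinuousLinearMap.comp_sub]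
          calc ‖((fderiv ℝ (fun y => M y (r.1 τ)) (x r.1 r.2 τ)).comp (Φ r.1 r.2 τ s))
              - ((fderiv ℝ (fun y => M y (r.1 τ)) (x r.1 r.2 τ)).comp (Φ r.1 r.2 τ s'))‖
              = ‖(fderiv ℝ (fun y => M y (r.1 τ)) (x r.1 r.2 τ)).comp
                (Φ r.1 r.2 τ s - Φ r.1 r.2 τ s')‖ := by rw [e1]
            _ ≤ L * ‖Φ r.1 r.2 τ s - Φ r.1 r.2 τ s'‖ :=
              (ContinuousLinearMap.opNorm_comp_le _ _).trans
                (mul_le_mul_of_nonneg_right (hJb r hr τ (hsub hτ)) (norm_nonneg _))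
            _ ≤ L * ‖Φ r.1 r.2 τ s - Φ r.1 r.2 τ s'‖ + 0 := by linarith)
        (by
          show ‖Φ r.1 r.2 s' s - Φ r.1 r.2 s' s'‖ ≤ L * dhat * (s' - s)
          rw [hΦinit r hr s' hs'T]; exact hmvi')
        t ⟨hs'.2, ht.2⟩
      refine hg.trans ?_
      have he : Real.exp (L * (T - s')) ≤ Real.exp (L * T) :=
        Real.exp_le_exp.2 (by nlinarith [hs'.1, hL.le])
      have hds : 0 ≤ s' - s := by linarith
      have h2 : 0 ≤ L * dhat * (s' - s) := by positivity
      calc (L * dhat * (s' - s) + 0 * (T - s')) * Real.exp (L * (T - s'))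
          ≤ (L * dhat * (s' - s)) * Real.exp (L * T) := by
            rw [zero_mul, add_zero]
            exact mul_le_mul_of_nonneg_left he h2
        _ = (L * dhat * Real.exp (L * T)) * (s' - s) := by ring
    have hlip : LipschitzOnWith (Real.toNNReal (L * dhat * Real.exp (L * T)))
        (fun s => Φ r.1 r.2 t s) (Icc 0 t) := by
      rw [lipschitzOnWith_iff_dist_le_mul]
      intro s hs s' hs'
      rw [dist_eq_norm, Real.dist_eq, Real.coe_toNNReal _ hC'0]
      rcases le_total s s' with h | h
      · rw [abs_of_nonpos (by linarith)]
        have hk := key s hs s' hs' h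
        linarith
      · rw [abs_of_nonneg (by linarith)]
        have hk := key s' hs' s hs h
        rw [norm_sub_rev]
        linarith
    exact hlip.continuousOn
  -- interval integrability of the integrands
  have hInt : ∀ r ∈ D, ∀ t ∈ Icc (0:ℝ) T, ∀ Δu : C(AddCircle T, Fin m → ℝ),
      IntervalIntegrable (fun s => Φ r.1 r.2 t s
        (M (x r.1 r.2 s) (Δu s) + fderiv ℝ f (r.1 s) (Δu s)))
        MeasureTheory.volume 0 t := by
    intro r hr t ht Δu
    have hsub : Icc (0:ℝ) t ⊆ Icc 0 T := Icc_subset_Icc le_rfl ht.2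
    have hΔu : Continuous fun s : ℝ => (Δu (s : AddCircle T)) :=
      Δu.continuous.comp (AddCircle.continuous_mk' T)
    have hu : Continuous fun s : ℝ => (r.1 (s : AddCircle T)) :=
      r.1.continuous.comp (AddCircle.continuous_mk' T)
    have hxc : ContinuousOn (x r.1 r.2) (Icc 0 t) := (hxcont r hr).mono hsub
    have hc : ContinuousOn (fun s : ℝ => Φ r.1 r.2 t s
        (M (x r.1 r.2 s) (Δu s) + fderiv ℝ f (r.1 s) (Δu s))) (Icc 0 t) := by
      refine ContinuousOn.clm_apply (hΦcont r hr t ht) (ContinuousOn.add ?_ ?_)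
      · exact ContinuousOn.clm_apply
          (hM.continuousOn.comp hxc fun s hs => hKΩ (hxK r hr s (hsub hs)))
          hΔu.continuousOn
      · exact ContinuousOn.clm_apply ((hDfc.comp hu).continuousOn) hΔu.continuousOn
    have huIcc : uIcc (0:ℝ) t = Icc 0 t := uIcc_of_le ht.1
    exact (huIcc ▸ hc).intervalIntegrable
  -- choice of δ
  set A : ℝ := T * (Ru + 1) * dhat * T * Real.exp (L * T) * (C0 + Cf) + 2 * T * dhat + 1
    with hAdef
  have hA : 0 < A := by
    have h1 : (0:ℝ) ≤ T * (Ru + 1) * dhat * T * Real.exp (L * T) * (C0 + Cf) := by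
      have : (0:ℝ) ≤ C0 + Cf := by linarith
      have h2 : (0:ℝ) ≤ T * (Ru + 1) * dhat * T * Real.exp (L * T) := by positivity
      exact mul_nonneg h2 this
    rw [hAdef]; nlinarith
  set θ : ℝ := ε / A with hθdef
  have hθ : 0 < θ := div_pos hε hA
  have hUC1 := hK.uniformContinuousOn_of_continuous (f := fun y => fderiv ℝ M y) (hDMcont.mono hKΩ)
  replace hUC1 := (Metric.uniformContinuousOn_iff (f := fun y => fderiv ℝ M y)).1 hUC1
  obtain ⟨δ₁, hδ₁pos, hδ₁⟩ := hUC1 θ hθ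
  have hUC2 := hK.uniformContinuousOn_of_continuous (hM.continuousOn.mono hKΩ)
  rw [Metric.uniformContinuousOn_iff] at hUC2
  obtain ⟨δ₂, hδ₂pos, hδ₂⟩ := hUC2 θ hθ
  have hUC3 := hKc.uniformContinuousOn_of_continuous hDfc.continuousOn
  rw [Metric.uniformContinuousOn_iff] at hUC3
  obtain ⟨δ₃, hδ₃pos, hδ₃⟩ := hUC3 θ hθ
  refine ⟨min (min δ₁ δ₂ / (2 * d)) (min δ₃ (θ / (CM + 1))),
    lt_min (div_pos (lt_min hδ₁pos hδ₂pos) (by linarith))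
      (lt_min hδ₃pos (div_pos hθ (by linarith))), ?_⟩
  set δ : ℝ := min (min δ₁ δ₂ / (2 * d)) (min δ₃ (θ / (CM + 1))) with hδdef
  have hδpos : 0 < δ := lt_min (div_pos (lt_min hδ₁pos hδ₂pos) (by linarith))
    (lt_min hδ₃pos (div_pos hθ (by linarith)))
  intro q hq hqu hqx t ht
  -- distance between the trajectories
  have hxd : ∀ s ∈ Icc (0:ℝ) T, ‖x q.1 q.2 s - x p.1 p.2 s‖ < min δ₁ δ₂ := by
    intro s hs
    have h1 := hLip q hq p hp s hs
    have h2 : ‖q.2 - p.2‖ + ‖q.1 - p.1‖ < 2 * δ := by linarith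
    have h3 : d * (‖q.2 - p.2‖ + ‖q.1 - p.1‖) < d * (2 * δ) :=
      mul_lt_mul_of_pos_left h2 hd
    have h4 : δ ≤ min δ₁ δ₂ / (2 * d) := min_le_left _ _
    have h5 : δ * (2 * d) ≤ min δ₁ δ₂ := (le_div_iff₀ (by linarith)).1 h4
    have h6 : d * (2 * δ) ≤ min δ₁ δ₂ := by nlinarith
    exact lt_of_le_of_lt h1 (h3.trans_le h6)
  have hδle3 : δ ≤ δ₃ := le_trans (min_le_right _ _) (min_le_left _ _)
  have hδleθ : δ ≤ θ / (CM + 1) := le_trans (min_le_right _ _) (min_le_right _ _)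
  have hud : ∀ s : ℝ, ‖q.1 s - p.1 s‖ < δ := by
    intro s
    calc ‖q.1 s - p.1 s‖ = ‖(q.1 - p.1) (s : AddCircle T)‖ := by
          rw [ContinuousMap.sub_apply]
      _ ≤ ‖q.1 - p.1‖ := ContinuousMap.norm_coe_le_norm _ _
      _ < δ := hqu
  have hDMd : ∀ s ∈ Icc (0:ℝ) T,
      ‖fderiv ℝ M (x q.1 q.2 s) - fderiv ℝ M (x p.1 p.2 s)‖ ≤ θ := by
    intro s hs
    have h := hδ₁ _ (hxK q hq s hs) _ (hxK p hp s hs)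
      (by rw [dist_eq_norm]; exact (hxd s hs).trans_le (min_le_left _ _))
    have h2 := dist_eq_norm (E := (Fin n → ℝ) →L[ℝ] (Fin m → ℝ) →L[ℝ] (Fin n → ℝ))
      (fderiv ℝ M (x q.1 q.2 s)) (fderiv ℝ M (x p.1 p.2 s))
    exact (le_of_eq h2.symm).trans h.le
  have hMd : ∀ s ∈ Icc (0:ℝ) T,
      ‖M (x q.1 q.2 s) - M (x p.1 p.2 s)‖ ≤ θ := by
    intro s hs
    have h := hδ₂ _ (hxK q hq s hs) _ (hxK p hp s hs)
      (by rw [dist_eq_norm]; exact (hxd s hs).trans_le (min_le_right _ _))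
    rw [dist_eq_norm] at h; exact h.le
  have hDfd : ∀ s : ℝ, ‖fderiv ℝ f (q.1 s) - fderiv ℝ f (p.1 s)‖ ≤ θ := by
    intro s
    have h := hδ₃ _ (huKc q hq s) _ (huKc p hp s)
      (by rw [dist_eq_norm]; exact (hud s).trans_le hδle3)
    rw [dist_eq_norm] at h; exact h.le
  set η : ℝ := θ * Ru + θ with hηdef
  have hη0 : 0 ≤ η := by
    have := mul_nonneg hθ.le hRu0
    rw [hηdef]; linarith
  -- distance between the Jacobians
  have hJd : ∀ s ∈ Icc (0:ℝ) T,
      ‖fderiv ℝ (fun y => M y (q.1 s)) (x q.1 q.2 s)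
        - fderiv ℝ (fun y => M y (p.1 s)) (x p.1 p.2 s)‖ ≤ η := by
    intro s hs
    rw [hJeq _ (hKΩ (hxK q hq s hs)) _, hJeq _ (hKΩ (hxK p hp s hs)) _]
    have h1 : ‖(fderiv ℝ M (x q.1 q.2 s)).flip (q.1 s)
        - (fderiv ℝ M (x p.1 p.2 s)).flip (q.1 s)‖ ≤ θ * Ru := by
      rw [aux_flip_sub_apply]
      refine (aux_flip_apply_norm_le _ _).trans ?_
      exact mul_le_mul (hDMd s hs) (hRu _ (huKc q hq s)) (norm_nonneg _) hθ.le
    have h2 : ‖(fderiv ℝ M (x p.1 p.2 s)).flip (q.1 s)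
        - (fderiv ℝ M (x p.1 p.2 s)).flip (p.1 s)‖ ≤ θ := by
      rw [← map_sub]
      refine (aux_flip_apply_norm_le _ _).trans ?_
      have h3 : ‖fderiv ℝ M (x p.1 p.2 s)‖ * ‖q.1 s - p.1 s‖ ≤ CM * δ :=
        mul_le_mul (hCM _ (hxK p hp s hs)) (hud _).le (norm_nonneg _) hCM0
      have h4 : δ * (CM + 1) ≤ θ := (le_div_iff₀ (by linarith)).1 hδleθ
      nlinarith [hδpos]
    rw [← sub_add_sub_cancel _ ((fderiv ℝ M (x p.1 p.2 s)).flip (q.1 s)) _]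
    refine (norm_add_le _ _).trans ?_
    rw [hηdef]; linarith
  -- distance between the transfer matrices
  have hΦB0 : 0 ≤ η * dhat * T * Real.exp (L * T) := by
    have h1 : 0 ≤ η * dhat * T := by
      exact mul_nonneg (mul_nonneg hη0 hdhat.le) hT0.le
    exact mul_nonneg h1 (Real.exp_pos _).le
  have hΦd : ∀ s ∈ Icc (0:ℝ) T, ∀ t' ∈ Icc s T,
      ‖Φ q.1 q.2 t' s - Φ p.1 p.2 t' s‖ ≤ η * dhat * T * Real.exp (L * T) := by
    intro s hs t' ht'
    have hsub : Icc s T ⊆ Icc (0:ℝ) T := Icc_subset_Icc hs.1 le_rfl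
    have hg := aux_gronwall
      (g := fun τ => Φ q.1 q.2 τ s - Φ p.1 p.2 τ s)
      (g' := fun τ =>
        ((fderiv ℝ (fun y => M y (q.1 τ)) (x q.1 q.2 τ)).comp (Φ q.1 q.2 τ s))
        - ((fderiv ℝ (fun y => M y (p.1 τ)) (x p.1 p.2 τ)).comp (Φ p.1 p.2 τ s)))
      (a := s) (b := T) (L := L) (η := η * dhat) (δ := 0)
      hL (mul_nonneg hη0 hdhat.le) le_rfl
      (fun τ hτ => ((hΦode q hq s hs τ (hsub hτ)).sub
        (hΦode p hp s hs τ (hsub hτ))).mono hsub)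
      (fun τ hτ => by
        have hτT := hsub hτ
        show ‖((fderiv ℝ (fun y => M y (q.1 τ)) (x q.1 q.2 τ)).comp (Φ q.1 q.2 τ s))
            - ((fderiv ℝ (fun y => M y (p.1 τ)) (x p.1 p.2 τ)).comp (Φ p.1 p.2 τ s))‖
            ≤ L * ‖Φ q.1 q.2 τ s - Φ p.1 p.2 τ s‖ + η * dhat
        have e1 : ((fderiv ℝ (fun y => M y (q.1 τ)) (x q.1 q.2 τ)).comp (Φ q.1 q.2 τ s))
            - ((fderiv ℝ (fun y => M y (p.1 τ)) (x p.1 p.2 τ)).comp (Φ p.1 p.2 τ s))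
            = (fderiv ℝ (fun y => M y (q.1 τ)) (x q.1 q.2 τ)).comp
                (Φ q.1 q.2 τ s - Φ p.1 p.2 τ s)
              + ((fderiv ℝ (fun y => M y (q.1 τ)) (x q.1 q.2 τ))
                  - (fderiv ℝ (fun y => M y (p.1 τ)) (x p.1 p.2 τ))).comp
                (Φ p.1 p.2 τ s) := by
          rw [ContinuousLinearMap.comp_sub, ContinuousLinearMap.sub_comp]; abel
        rw [e1]
        refine (norm_add_le _ _).trans ?_
        have b1 : ‖(fderiv ℝ (fun y => M y (q.1 τ)) (x q.1 q.2 τ)).comp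
            (Φ q.1 q.2 τ s - Φ p.1 p.2 τ s)‖
            ≤ L * ‖Φ q.1 q.2 τ s - Φ p.1 p.2 τ s‖ :=
          (ContinuousLinearMap.opNorm_comp_le _ _).trans
            (mul_le_mul_of_nonneg_right (hJb q hq τ hτT) (norm_nonneg _))
        have b2 : ‖((fderiv ℝ (fun y => M y (q.1 τ)) (x q.1 q.2 τ))
            - (fderiv ℝ (fun y => M y (p.1 τ)) (x p.1 p.2 τ))).comp
            (Φ p.1 p.2 τ s)‖ ≤ η * dhat :=
          (ContinuousLinearMap.opNorm_comp_le _ _).trans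
            (mul_le_mul (hJd τ hτT) (hΦbound p hp s τ hs.1 hτ.1 hτT.2)
              (norm_nonneg _) hη0)
        linarith)
      (by simp [hΦinit q hq s hs, hΦinit p hp s hs])
      t' ht'
    refine hg.trans ?_
    have he : Real.exp (L * (T - s)) ≤ Real.exp (L * T) :=
      Real.exp_le_exp.2 (by nlinarith [hs.1, hL.le])
    have h1 : 0 ≤ η * dhat * (T - s) :=
      mul_nonneg (mul_nonneg hη0 hdhat.le) (by linarith [hs.2])
    have h2 : η * dhat * (T - s) ≤ η * dhat * T := by
      have := mul_nonneg hη0 hdhat.le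
      nlinarith [hs.1]
    calc (0 + η * dhat * (T - s)) * Real.exp (L * (T - s))
        ≤ (η * dhat * T) * Real.exp (L * T) := by
          rw [zero_add]
          exact mul_le_mul h2 he (Real.exp_pos _).le
            (by positivity)
      _ = η * dhat * T * Real.exp (L * T) := by ring
  -- final operator-norm estimate
  refine ContinuousLinearMap.opNorm_le_bound _ hε.le fun Δu => ?_
  rw [ContinuousLinearMap.sub_apply, hB q hq t ht Δu, hB p hp t ht Δu,
    ← intervalIntegral.integral_sub (hInt q hq t ht Δu) (hInt p hp t ht Δu)]
  set Cint : ℝ := η * dhat * T * Real.exp (L * T) * (C0 + Cf) + dhat * (θ + θ)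
    with hCintdef
  have hCint0 : 0 ≤ Cint := by
    have h1 : (0:ℝ) ≤ C0 + Cf := by linarith
    have h2 : 0 ≤ η * dhat * T * Real.exp (L * T) * (C0 + Cf) := mul_nonneg hΦB0 h1
    have h3 : 0 ≤ dhat * (θ + θ) := mul_nonneg hdhat.le (by linarith)
    rw [hCintdef]; linarith
  have hptwise : ∀ s ∈ Set.uIoc (0:ℝ) t,
      ‖Φ q.1 q.2 t s (M (x q.1 q.2 s) (Δu s) + fderiv ℝ f (q.1 s) (Δu s))
        - Φ p.1 p.2 t s (M (x p.1 p.2 s) (Δu s) + fderiv ℝ f (p.1 s) (Δu s))‖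
        ≤ Cint * ‖Δu‖ := by
    intro s hs
    rw [Set.uIoc_of_le ht.1] at hs
    have hsT : s ∈ Icc (0:ℝ) T := ⟨hs.1.le, hs.2.trans ht.2⟩
    have hst : t ∈ Icc s T := ⟨hs.2, ht.2⟩
    have hΔus : ‖Δu (s : AddCircle T)‖ ≤ ‖Δu‖ := Δu.norm_coe_le_norm _
    have hXq : ‖M (x q.1 q.2 s) (Δu s) + fderiv ℝ f (q.1 s) (Δu s)‖
        ≤ (C0 + Cf) * ‖Δu‖ := by
      refine (norm_add_le _ _).trans ?_
      have n1 : ‖M (x q.1 q.2 s) (Δu s)‖ ≤ C0 * ‖Δu‖ :=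
        ((M _).le_opNorm _).trans
          (mul_le_mul (hC0 _ (hxK q hq s hsT)) hΔus (norm_nonneg _) hC00)
      have n2 : ‖fderiv ℝ f (q.1 s) (Δu s)‖ ≤ Cf * ‖Δu‖ :=
        ((fderiv ℝ f _).le_opNorm _).trans
          (mul_le_mul (hCf _ (huKc q hq s)) hΔus (norm_nonneg _) hCf0)
      nlinarith [norm_nonneg Δu]
    have hXd : ‖(M (x q.1 q.2 s) (Δu s) + fderiv ℝ f (q.1 s) (Δu s))
        - (M (x p.1 p.2 s) (Δu s) + fderiv ℝ f (p.1 s) (Δu s))‖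
        ≤ (θ + θ) * ‖Δu‖ := by
      have e : (M (x q.1 q.2 s) (Δu s) + fderiv ℝ f (q.1 s) (Δu s))
          - (M (x p.1 p.2 s) (Δu s) + fderiv ℝ f (p.1 s) (Δu s))
          = (M (x q.1 q.2 s) - M (x p.1 p.2 s)) (Δu s)
            + (fderiv ℝ f (q.1 s) - fderiv ℝ f (p.1 s)) (Δu s) := by
        simp only [ContinuousLinearMap.sub_apply]; abel
      rw [e]
      refine (norm_add_le _ _).trans ?_
      have n1 : ‖(M (x q.1 q.2 s) - M (x p.1 p.2 s)) (Δu s)‖ ≤ θ * ‖Δu‖ :=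
        (ContinuousLinearMap.le_opNorm _ _).trans
          (mul_le_mul (hMd s hsT) hΔus (norm_nonneg _) hθ.le)
      have n2 : ‖(fderiv ℝ f (q.1 s) - fderiv ℝ f (p.1 s)) (Δu s)‖ ≤ θ * ‖Δu‖ :=
        (ContinuousLinearMap.le_opNorm _ _).trans
          (mul_le_mul (hDfd s) hΔus (norm_nonneg _) hθ.le)
      nlinarith
    have hsplit : Φ q.1 q.2 t s (M (x q.1 q.2 s) (Δu s) + fderiv ℝ f (q.1 s) (Δu s))
        - Φ p.1 p.2 t s (M (x p.1 p.2 s) (Δu s) + fderiv ℝ f (p.1 s) (Δu s))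
        = (Φ q.1 q.2 t s - Φ p.1 p.2 t s)
            (M (x q.1 q.2 s) (Δu s) + fderiv ℝ f (q.1 s) (Δu s))
          + Φ p.1 p.2 t s
            ((M (x q.1 q.2 s) (Δu s) + fderiv ℝ f (q.1 s) (Δu s))
              - (M (x p.1 p.2 s) (Δu s) + fderiv ℝ f (p.1 s) (Δu s))) := by
      simp only [ContinuousLinearMap.sub_apply, map_sub]; abel
    rw [hsplit]
    refine (norm_add_le _ _).trans ?_
    have c1 : ‖(Φ q.1 q.2 t s - Φ p.1 p.2 t s)
        (M (x q.1 q.2 s) (Δu s) + fderiv ℝ f (q.1 s) (Δu s))‖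
        ≤ (η * dhat * T * Real.exp (L * T)) * ((C0 + Cf) * ‖Δu‖) :=
      (ContinuousLinearMap.le_opNorm _ _).trans
        (mul_le_mul (hΦd s hsT t hst) hXq (norm_nonneg _) hΦB0)
    have c2 : ‖Φ p.1 p.2 t s
        ((M (x q.1 q.2 s) (Δu s) + fderiv ℝ f (q.1 s) (Δu s))
          - (M (x p.1 p.2 s) (Δu s) + fderiv ℝ f (p.1 s) (Δu s)))‖
        ≤ dhat * ((θ + θ) * ‖Δu‖) :=
      (ContinuousLinearMap.le_opNorm _ _).trans
        (mul_le_mul (hΦbound p hp s t hsT.1 hs.2 ht.2) hXd (norm_nonneg _) hdhat.le)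
    calc _ ≤ (η * dhat * T * Real.exp (L * T)) * ((C0 + Cf) * ‖Δu‖)
          + dhat * ((θ + θ) * ‖Δu‖) := add_le_add c1 c2
      _ = Cint * ‖Δu‖ := by rw [hCintdef]; ring
  refine (intervalIntegral.norm_integral_le_of_norm_le_const hptwise).trans ?_
  rw [sub_zero, abs_of_nonneg ht.1]
  have hCT : Cint * T ≤ ε := by
    have e1 : Cint * T = θ * (A - 1) := by
      rw [hCintdef, hηdef, hAdef]; ring
    have e2 : θ * A = ε := by
      rw [hθdef]; field_simp
    nlinarith [hθ.le]
  nlinarith [mul_le_mul_of_nonneg_left ht.2 (mul_nonneg hCint0 (norm_nonneg Δu)),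
    mul_le_mul_of_nonneg_right hCT (norm_nonneg Δu), norm_nonneg Δu, hCint0]
end

section
/- Under the hypotheses (i)–(iv) of the previous setting — a family of solutions x(·;u,x₀) : [0,T] → Ω of the bilinear control system for (u,x₀) ∈ D with values in a fixed compact K ⊆ Ω, the Lipschitz-in-data estimate |x(t;u,x₀) − x(t;ũ,x̃₀)| ≤ d·( |x₀ − x̃₀| + ‖u − ũ‖_Z ), the uniform transfer-matrix bound ‖Φ_{u,x₀}(t;s)‖ ≤ d̂, and controls with values in a fixed compact subset of ℝ^m — the map (u,x₀) ↦ Φ_{u,x₀}(t;0) is continuous on D uniformly in t: for every (u,x₀) ∈ D, sup_{t∈[0,T]} ‖Φ_{ũ,x̃₀}(t;0) − Φ_{u,x₀}(t;0)‖ → 0 as (ũ,x̃₀) → (u,x₀) within D. -/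
open Set

/-- Proposition 7 of the paper.  Under the uniform
compactness, Lipschitz-in-data, and transfer-matrix bounds (i)–(iv), the
state-sensitivity matrix `(u,x₀) ↦ Φ_{u,x₀}(t;0)` is continuous in the data
`(u,x₀) ∈ D`, uniformly in `t ∈ [0,T]`. -/
theorem state_sensitivity_matrix_continuous
    {n m : ℕ} {T : ℝ} [hT : Fact (0 < T)]
    (f : (Fin m → ℝ) → (Fin n → ℝ)) (hf : ContDiff ℝ 1 f)
    (M : (Fin n → ℝ) → ((Fin m → ℝ) →L[ℝ] (Fin n → ℝ)))
    (Ω : Set (Fin n → ℝ)) (hΩ : IsOpen Ω) (hM : ContDiffOn ℝ 1 M Ω)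
    (D : Set (C(AddCircle T, Fin m → ℝ) × (Fin n → ℝ)))
    -- the family of solutions indexed by the data `(u, x₀) ∈ D`
    (x : C(AddCircle T, Fin m → ℝ) → (Fin n → ℝ) → ℝ → (Fin n → ℝ))
    (hsol : ∀ p ∈ D,
      IsBilinearSolutionOn f M Ω (fun t : ℝ => p.1 t) (x p.1 p.2) (Icc 0 T) ∧
      x p.1 p.2 0 = p.2)
    -- (i) uniform compactness of the trajectories
    (K : Set (Fin n → ℝ)) (hK : IsCompact K) (hKΩ : K ⊆ Ω)
    (hxK : ∀ p ∈ D, ∀ t ∈ Icc (0:ℝ) T, x p.1 p.2 t ∈ K)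
    -- (ii) Lipschitz dependence on the data
    (d : ℝ) (hd : 0 < d)
    (hLip : ∀ p ∈ D, ∀ q ∈ D, ∀ t ∈ Icc (0:ℝ) T,
      ‖x p.1 p.2 t - x q.1 q.2 t‖ ≤ d * (‖p.2 - q.2‖ + ‖p.1 - q.1‖))
    -- (iii) transfer matrices with a uniform bound
    (Φ : C(AddCircle T, Fin m → ℝ) → (Fin n → ℝ) → ℝ → ℝ →
      ((Fin n → ℝ) →L[ℝ] (Fin n → ℝ)))
    (hΦinit : ∀ p ∈ D, ∀ s ∈ Icc (0:ℝ) T, Φ p.1 p.2 s s = 1)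
    (hΦode : ∀ p ∈ D, ∀ s ∈ Icc (0:ℝ) T, ∀ t ∈ Icc (0:ℝ) T,
      HasDerivWithinAt (fun τ => Φ p.1 p.2 τ s)
        ((fderiv ℝ (fun y => M y (p.1 t)) (x p.1 p.2 t)).comp (Φ p.1 p.2 t s))
        (Icc 0 T) t)
    (dhat : ℝ) (hdhat : 0 < dhat)
    (hΦbound : ∀ p ∈ D, ∀ s t : ℝ, 0 ≤ s → s ≤ t → t ≤ T →
      ‖Φ p.1 p.2 t s‖ ≤ dhat)
    -- (iv) controls take values in a fixed compact set
    (Kc : Set (Fin m → ℝ)) (hKc : IsCompact Kc)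
    (huKc : ∀ p ∈ D, ∀ t : ℝ, p.1 t ∈ Kc) :
    ∀ p ∈ D, ∀ ε > 0, ∃ δ > 0, ∀ q ∈ D,
      ‖q.1 - p.1‖ < δ → ‖q.2 - p.2‖ < δ →
      ∀ t ∈ Icc (0:ℝ) T, ‖Φ q.1 q.2 t 0 - Φ p.1 p.2 t 0‖ ≤ ε := by
  intro p hp ε hε
  have hT0 : (0:ℝ) < T := hT.out
  have hmem0 : (0:ℝ) ∈ Icc (0:ℝ) T := ⟨le_rfl, hT0.le⟩
  -- the coefficient map G(y,v) = D(y ↦ M y v)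
  set G : (Fin n → ℝ) × (Fin m → ℝ) → ((Fin n → ℝ) →L[ℝ] (Fin n → ℝ)) :=
    fun z => (ContinuousLinearMap.apply ℝ (Fin n → ℝ) z.2).comp (fderiv ℝ M z.1) with hGdef
  have hGfd : ∀ y ∈ Ω, ∀ v : Fin m → ℝ, fderiv ℝ (fun y => M y v) y = G (y, v) := by
    intro y hy v
    have hd : DifferentiableAt ℝ M y :=
      (hM.differentiableOn one_ne_zero).differentiableAt (hΩ.mem_nhds hy)
    have h : HasFDerivAt (fun y => M y v)
        ((ContinuousLinearMap.apply ℝ (Fin n → ℝ) v).comp (fderiv ℝ M y)) y :=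
      (ContinuousLinearMap.apply ℝ (Fin n → ℝ) v).hasFDerivAt.comp y hd.hasFDerivAt
    exact h.fderiv
  -- continuity of G on K ×ˢ Kc
  have hDMcont : ContinuousOn (fderiv ℝ M) Ω := hM.continuousOn_fderiv_of_isOpen hΩ le_rfl
  have hGcont : ContinuousOn G (K ×ˢ Kc) := by
    apply ContinuousOn.clm_comp
    · exact ((ContinuousLinearMap.apply ℝ (Fin n → ℝ) :
        (Fin m → ℝ) →L[ℝ] _).continuous.comp continuous_snd).continuousOn
    · exact hDMcont.comp continuous_fst.continuousOn
        (fun z hz => hKΩ (mem_prod.mp hz).1)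
  -- uniform bound on G over K ×ˢ Kc
  obtain ⟨CM, hCM⟩ := hK.exists_bound_of_continuousOn (f := fderiv ℝ M) (hDMcont.mono hKΩ)
  obtain ⟨rc, hrc⟩ := hKc.exists_bound_of_continuousOn continuousOn_id
  set L : ℝ := max rc 0 * max CM 0 + 1 with hLdef
  have hL1 : (1:ℝ) ≤ L := le_add_of_nonneg_left (mul_nonneg (le_max_right _ _) (le_max_right _ _))
  have hL0 : (0:ℝ) < L := lt_of_lt_of_le one_pos hL1
  have hGbound : ∀ y ∈ K, ∀ v ∈ Kc, ‖G (y, v)‖ ≤ L := by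
    intro y hy v hv
    have h1 : ‖ContinuousLinearMap.apply ℝ (Fin n → ℝ) v‖ ≤ ‖v‖ := by
      apply ContinuousLinearMap.opNorm_le_bound _ (norm_nonneg v)
      intro A; rw [mul_comm]; exact A.le_opNorm v
    calc ‖G (y, v)‖ ≤ ‖ContinuousLinearMap.apply ℝ (Fin n → ℝ) v‖ * ‖fderiv ℝ M y‖ :=
          ContinuousLinearMap.opNorm_comp_le _ _
      _ ≤ max rc 0 * max CM 0 := by
          exact mul_le_mul (h1.trans ((hrc v hv).trans (le_max_left _ _)))
            ((hCM y hy).trans (le_max_left _ _)) (by positivity) (le_max_right _ _)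
      _ ≤ L := le_add_of_nonneg_right one_pos.le
  -- uniform continuity of G on the compact set K ×ˢ Kc
  have hUC := ((hK.prod hKc).uniformContinuousOn_of_continuous hGcont)
  rw [Metric.uniformContinuousOn_iff] at hUC
  -- choice of constants
  set ε₁ : ℝ := ε * L / (dhat * Real.exp (L * T)) with hε₁def
  have hε₁ : 0 < ε₁ :=
    div_pos (mul_pos hε hL0) (mul_pos hdhat (Real.exp_pos _))
  obtain ⟨η, hη, hGuc⟩ := hUC ε₁ hε₁
  refine ⟨min (η / (2 * d)) η, lt_min (div_pos hη (by linarith)) hη, ?_⟩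
  intro q hq hq1 hq2 t ht
  -- the difference of transfer matrices
  set g : ℝ → ((Fin n → ℝ) →L[ℝ] (Fin n → ℝ)) :=
    fun τ => Φ q.1 q.2 τ 0 - Φ p.1 p.2 τ 0 with hgdef
  set g' : ℝ → ((Fin n → ℝ) →L[ℝ] (Fin n → ℝ)) :=
    fun τ => (G (x q.1 q.2 τ, q.1 τ)).comp (Φ q.1 q.2 τ 0) -
      (G (x p.1 p.2 τ, p.1 τ)).comp (Φ p.1 p.2 τ 0) with hg'def
  have hgIcc : ∀ τ ∈ Icc (0:ℝ) T, HasDerivWithinAt g (g' τ) (Icc 0 T) τ := by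
    intro τ hτ
    have h1 := hΦode q hq 0 hmem0 τ hτ
    have h2 := hΦode p hp 0 hmem0 τ hτ
    rw [hGfd _ (hKΩ (hxK q hq τ hτ)) _] at h1
    rw [hGfd _ (hKΩ (hxK p hp τ hτ)) _] at h2
    exact h1.sub h2
  have hcont : ContinuousOn g (Icc 0 T) := fun τ hτ => (hgIcc τ hτ).continuousWithinAt
  have hgIci : ∀ τ ∈ Ico (0:ℝ) T, HasDerivWithinAt g (g' τ) (Ici τ) τ := fun τ hτ =>
    (hgIcc τ (Ico_subset_Icc_self hτ)).mono_of_mem_nhdsWithin (Icc_mem_nhdsGE_of_mem hτ)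
  -- closeness of the coefficients along the two trajectories
  have hclose : ∀ τ ∈ Icc (0:ℝ) T,
      ‖G (x q.1 q.2 τ, q.1 τ) - G (x p.1 p.2 τ, p.1 τ)‖ ≤ ε₁ := by
    intro τ hτ
    have hxq : x q.1 q.2 τ ∈ K := hxK q hq τ hτ
    have hxp : x p.1 p.2 τ ∈ K := hxK p hp τ hτ
    have huq : q.1 τ ∈ Kc := huKc q hq τ
    have hup : p.1 τ ∈ Kc := huKc p hp τ
    have hd1 : dist (x q.1 q.2 τ) (x p.1 p.2 τ) < η := by
      rw [dist_eq_norm]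
      calc ‖x q.1 q.2 τ - x p.1 p.2 τ‖ ≤ d * (‖q.2 - p.2‖ + ‖q.1 - p.1‖) :=
            hLip q hq p hp τ hτ
        _ < d * (min (η / (2 * d)) η + min (η / (2 * d)) η) := by
            apply mul_lt_mul_of_pos_left _ hd
            exact add_lt_add hq2 hq1
        _ ≤ d * (η / (2 * d) + η / (2 * d)) := by
            apply mul_le_mul_of_nonneg_left _ hd.le
            exact add_le_add (min_le_left _ _) (min_le_left _ _)
        _ = η := by field_simp; ring
    have hd2 : dist (q.1 (τ : AddCircle T)) (p.1 (τ : AddCircle T)) < η := by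
      rw [dist_eq_norm]
      calc ‖q.1 (τ : AddCircle T) - p.1 (τ : AddCircle T)‖
          = ‖(q.1 - p.1) (τ : AddCircle T)‖ := by rw [ContinuousMap.sub_apply]
        _ ≤ ‖q.1 - p.1‖ := ContinuousMap.norm_coe_le_norm _ _
        _ < min (η / (2 * d)) η := hq1
        _ ≤ η := min_le_right _ _
    have hdp : dist ((x q.1 q.2 τ, q.1 (τ : AddCircle T)) :
        (Fin n → ℝ) × (Fin m → ℝ)) (x p.1 p.2 τ, p.1 (τ : AddCircle T)) < η := by
      rw [Prod.dist_eq]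
      exact max_lt hd1 hd2
    have := hGuc _ (mem_prod.mpr ⟨hxq, huq⟩) _ (mem_prod.mpr ⟨hxp, hup⟩) hdp
    rw [dist_eq_norm] at this
    exact this.le
  -- derivative bound for Grönwall
  have hbound : ∀ τ ∈ Ico (0:ℝ) T, ‖g' τ‖ ≤ L * ‖g τ‖ + dhat * ε₁ := by
    intro τ hτ'
    have hτ := Ico_subset_Icc_self hτ'
    set Aq := G (x q.1 q.2 τ, q.1 τ) with hAq
    set Ap := G (x p.1 p.2 τ, p.1 τ) with hAp
    have hkey : g' τ = Aq.comp (g τ) + (Aq - Ap).comp (Φ p.1 p.2 τ 0) := by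
      simp only [hg'def, hgdef, ContinuousLinearMap.comp_sub, ContinuousLinearMap.sub_comp]
      abel
    rw [hkey]
    have hΦp : ‖Φ p.1 p.2 τ 0‖ ≤ dhat := hΦbound p hp 0 τ le_rfl hτ.1 hτ.2
    calc ‖Aq.comp (g τ) + (Aq - Ap).comp (Φ p.1 p.2 τ 0)‖
        ≤ ‖Aq.comp (g τ)‖ + ‖(Aq - Ap).comp (Φ p.1 p.2 τ 0)‖ := norm_add_le _ _
      _ ≤ ‖Aq‖ * ‖g τ‖ + ‖Aq - Ap‖ * ‖Φ p.1 p.2 τ 0‖ :=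
          add_le_add (ContinuousLinearMap.opNorm_comp_le _ _)
            (ContinuousLinearMap.opNorm_comp_le _ _)
      _ ≤ L * ‖g τ‖ + ε₁ * dhat := by
          apply add_le_add
          · exact mul_le_mul_of_nonneg_right
              (hGbound _ (hxK q hq τ hτ) _ (huKc q hq τ)) (norm_nonneg _)
          · exact mul_le_mul (hclose τ hτ) hΦp (norm_nonneg _) hε₁.le
      _ = L * ‖g τ‖ + dhat * ε₁ := by ring
  -- initial condition
  have hg0 : ‖g 0‖ ≤ 0 := by
    simp only [hgdef, hΦinit q hq 0 hmem0, hΦinit p hp 0 hmem0, sub_self, norm_zero, le_refl]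
  -- Grönwall
  have hgron := norm_le_gronwallBound_of_norm_deriv_right_le hcont hgIci hg0 hbound t ht
  refine hgron.trans ?_
  have hLne : L ≠ 0 := hL0.ne'
  rw [gronwallBound_of_K_ne_0 hLne]
  simp only [zero_mul, zero_add]
  have hexp : Real.exp (L * (t - 0)) - 1 ≤ Real.exp (L * T) := by
    have : L * (t - 0) ≤ L * T := by
      apply mul_le_mul_of_nonneg_left _ hL0.le
      simpa using ht.2
    linarith [Real.exp_le_exp.mpr this]
  have hcoef : 0 ≤ dhat * ε₁ / L := by positivity
  calc dhat * ε₁ / L * (Real.exp (L * (t - 0)) - 1)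
      ≤ dhat * ε₁ / L * Real.exp (L * T) := mul_le_mul_of_nonneg_left hexp hcoef
    _ = ε := by
        rw [hε₁def]
        field_simp
end

section
/- Let a, ω > 0 and T := 2π/ω. Suppose γ₁, γ₂ : ℝ → ℝ are differentiable, T-periodic (γᵢ(t+T) = γᵢ(t) for all t), and satisfy γ₁'(t) = −γ₁(t) + γ₂(t)² and γ₂'(t) = −γ₂(t) + a·sin(ω·t) for all t ∈ ℝ. Then (1/T)·∫₀ᵀ γ₁(t) dt = a² / ( 2·(1 + ω²) ). In particular this average is strictly positive, whereas the T-periodic solution corresponding to the zero input u ≡ 0 (which has the same average as a·sin(ω·t)) is γ₁ ≡ γ₂ ≡ 0 with zero average output. -/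
/-- A function with `f' = -f` that returns to its initial value after time `T > 0`
is identically zero. -/
lemma decay_zero (T : ℝ) (hT : 0 < T) (f : ℝ → ℝ)
    (hf : ∀ t, HasDerivAt f (-f t) t) (hper : f T = f 0) : ∀ t, f t = 0 := by
  have hg : ∀ t, HasDerivAt (fun t => Real.exp t * f t) 0 t := by
    intro t
    have := (Real.hasDerivAt_exp t).mul (hf t)
    exact this.congr_deriv (by ring)
  have hconst : ∀ x y : ℝ, Real.exp x * f x = Real.exp y * f y := by
    have := is_const_of_deriv_eq_zero (f := fun t => Real.exp t * f t)
      (fun t => (hg t).differentiableAt) (fun t => (hg t).deriv)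
    intro x y; exact this x y
  have key : ∀ t, Real.exp t * f t = f 0 := by
    intro t; simpa using hconst t 0
  have h0 : f 0 = 0 := by
    have h1 := key T
    rw [hper] at h1
    nlinarith [Real.one_lt_exp_iff.mpr hT]
  intro t
  have := key t
  rw [h0] at this
  have he := Real.exp_pos t
  nlinarith

/-- The explicit periodic solution of `p' = -p + a sin(ωt)`. -/
lemma p_deriv (a ω : ℝ) (hω : 0 < ω) (t : ℝ) :
    HasDerivAt (fun t => a / (1 + ω^2) * (Real.sin (ω*t) - ω * Real.cos (ω*t)))
      (-(a / (1 + ω^2) * (Real.sin (ω*t) - ω * Real.cos (ω*t))) + a * Real.sin (ω*t)) t := by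
  have hs : HasDerivAt (fun t => Real.sin (ω*t)) (ω * Real.cos (ω*t)) t := by
    exact ((Real.hasDerivAt_sin (ω*t)).comp t ((hasDerivAt_id t).const_mul ω)).congr_deriv (by simp only [mul_one]; ring)
  have hc : HasDerivAt (fun t => Real.cos (ω*t)) (-(ω * Real.sin (ω*t))) t := by
    exact ((Real.hasDerivAt_cos (ω*t)).comp t ((hasDerivAt_id t).const_mul ω)).congr_deriv (by simp only [mul_one]; ring)
  have h := ((hs.sub (hc.const_mul ω)).const_mul (a / (1 + ω^2)))
  refine h.congr_deriv ?_
  have h1 : (1:ℝ) + ω^2 ≠ 0 := by positivity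
  field_simp
  ring

/-- An antiderivative of the square of the explicit periodic solution. -/
lemma F_deriv (a ω : ℝ) (hω : 0 < ω) (t : ℝ) :
    HasDerivAt (fun t => (a/(1+ω^2))^2 * ((1+ω^2)*t/2
        + (ω^2-1) * (Real.sin (ω*t) * Real.cos (ω*t))/(2*ω) - Real.sin (ω*t)^2))
      ((a/(1+ω^2) * (Real.sin (ω*t) - ω * Real.cos (ω*t)))^2) t := by
  have hs : HasDerivAt (fun t => Real.sin (ω*t)) (ω * Real.cos (ω*t)) t := by
    exact ((Real.hasDerivAt_sin (ω*t)).comp t ((hasDerivAt_id t).const_mul ω)).congr_deriv (by simp only [mul_one]; ring)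
  have hc : HasDerivAt (fun t => Real.cos (ω*t)) (-(ω * Real.sin (ω*t))) t := by
    exact ((Real.hasDerivAt_cos (ω*t)).comp t ((hasDerivAt_id t).const_mul ω)).congr_deriv (by simp only [mul_one]; ring)
  have h1 : HasDerivAt (fun t => (1+ω^2)*t/2) ((1+ω^2)/2) t := by
    simpa using ((hasDerivAt_id t).const_mul ((1:ℝ)+ω^2)).div_const 2
  have h2 : HasDerivAt (fun t => (ω^2-1) * (Real.sin (ω*t) * Real.cos (ω*t))/(2*ω))
      ((ω^2-1) * (ω * Real.cos (ω*t) * Real.cos (ω*t) + Real.sin (ω*t) * -(ω * Real.sin (ω*t))) / (2*ω)) t := by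
    exact ((hs.mul hc).const_mul ((ω:ℝ)^2-1)).div_const (2*ω)
  have h3 : HasDerivAt (fun t => Real.sin (ω*t)^2) (2 * Real.sin (ω*t) * (ω * Real.cos (ω*t))) t := by
    exact (hs.pow 2).congr_deriv (by norm_num)
  have h := ((h1.add h2).sub h3).const_mul ((a/(1+ω^2))^2)
  refine h.congr_deriv ?_
  have hω0 : (ω:ℝ) ≠ 0 := ne_of_gt hω
  have hp : Real.sin (ω*t)^2 + Real.cos (ω*t)^2 = 1 := Real.sin_sq_add_cos_sq _
  field_simp
  linear_combination (-(a^2*(1+ω^2))) * hp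

/-- For the nonlinear contractive system
`γ₁' = −γ₁ + γ₂²`, `γ₂' = −γ₂ + a·sin(ωt)`, any `T`-periodic solution
(`T = 2π/ω`) has average output `(1/T)∫₀ᵀ γ₁ = a²/(2(1+ω²)) > 0`, whereas the
`T`-periodic solution for the zero input (same average input) is identically
zero. -/
theorem example_nonlinear_system_positive_gain_of_entrainment
    (a ω : ℝ) (ha : 0 < a) (hω : 0 < ω) (T : ℝ) (hTdef : T = 2 * Real.pi / ω)
    (γ₁ γ₂ : ℝ → ℝ)
    (hγ₁ : ∀ t : ℝ, HasDerivAt γ₁ (-γ₁ t + (γ₂ t) ^ 2) t)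
    (hγ₂ : ∀ t : ℝ, HasDerivAt γ₂ (-γ₂ t + a * Real.sin (ω * t)) t)
    (hγ₁per : ∀ t : ℝ, γ₁ (t + T) = γ₁ t)
    (hγ₂per : ∀ t : ℝ, γ₂ (t + T) = γ₂ t) :
    (1 / T) * (∫ t in (0:ℝ)..T, γ₁ t) = a ^ 2 / (2 * (1 + ω ^ 2))
    ∧ 0 < (1 / T) * (∫ t in (0:ℝ)..T, γ₁ t)
    ∧ (∀ δ₁ δ₂ : ℝ → ℝ,
        (∀ t : ℝ, HasDerivAt δ₁ (-δ₁ t + (δ₂ t) ^ 2) t) →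
        (∀ t : ℝ, HasDerivAt δ₂ (-δ₂ t) t) →
        (∀ t : ℝ, δ₁ (t + T) = δ₁ t) →
        (∀ t : ℝ, δ₂ (t + T) = δ₂ t) →
        ∀ t : ℝ, δ₁ t = 0 ∧ δ₂ t = 0) := by
  have hω0 : ω ≠ 0 := ne_of_gt hω
  have hT : 0 < T := by rw [hTdef]; positivity
  have hT0 : T ≠ 0 := ne_of_gt hT
  have hωT : ω * T = 2 * Real.pi := by rw [hTdef]; field_simp
  have h1ω : (1:ℝ) + ω^2 ≠ 0 := by positivity
  set p : ℝ → ℝ := fun t => a / (1 + ω^2) * (Real.sin (ω*t) - ω * Real.cos (ω*t)) with hp_def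
  -- γ₂ coincides with the explicit periodic solution p
  have hγ₂p : ∀ t, γ₂ t = p t := by
    have hd : ∀ t, HasDerivAt (fun t => γ₂ t - p t) (-(γ₂ t - p t)) t := by
      intro t
      have := (hγ₂ t).sub (p_deriv a ω hω t)
      exact this.congr_deriv (by ring)
    have hper : γ₂ T - p T = γ₂ 0 - p 0 := by
      have h2 : γ₂ T = γ₂ 0 := by simpa using hγ₂per 0
      have hpT : p T = p 0 := by
        simp only [hp_def, hωT, mul_zero, Real.sin_two_pi, Real.cos_two_pi,
          Real.sin_zero, Real.cos_zero]
      rw [h2, hpT]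
    have := decay_zero T hT (fun t => γ₂ t - p t) hd hper
    intro t
    have h : γ₂ t - p t = 0 := this t
    linarith
  -- continuity
  have hc1 : Continuous γ₁ := by
    refine continuous_iff_continuousAt.mpr fun t => (hγ₁ t).continuousAt
  have hc2 : Continuous γ₂ := by
    refine continuous_iff_continuousAt.mpr fun t => (hγ₂ t).continuousAt
  -- the mean of γ₁ equals the mean of γ₂²
  have hint1 : (∫ t in (0:ℝ)..T, (-γ₁ t + (γ₂ t)^2)) = 0 := by
    rw [intervalIntegral.integral_eq_sub_of_hasDerivAt (fun t _ => hγ₁ t)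
      ((hc1.neg.add (hc2.pow 2)).intervalIntegrable 0 T)]
    have : γ₁ T = γ₁ 0 := by simpa using hγ₁per 0
    rw [this, sub_self]
  have hsplit : (∫ t in (0:ℝ)..T, (-γ₁ t + (γ₂ t)^2))
      = -(∫ t in (0:ℝ)..T, γ₁ t) + (∫ t in (0:ℝ)..T, (γ₂ t)^2) := by
    rw [intervalIntegral.integral_add (f := fun t => -γ₁ t) (g := fun t => (γ₂ t)^2) (hc1.neg.intervalIntegrable 0 T)
      ((hc2.pow 2).intervalIntegrable 0 T), intervalIntegral.integral_neg]
  have heq1 : (∫ t in (0:ℝ)..T, γ₁ t) = ∫ t in (0:ℝ)..T, (γ₂ t)^2 := by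
    rw [hsplit] at hint1; linarith
  -- compute the integral of p²
  have heq2 : (∫ t in (0:ℝ)..T, (γ₂ t)^2) = ∫ t in (0:ℝ)..T, (p t)^2 := by
    apply intervalIntegral.integral_congr
    intro t _; simp only [hγ₂p t]
  have hcp : Continuous p := by
    apply Continuous.mul continuous_const
    exact ((Real.continuous_sin.comp (continuous_const.mul continuous_id)).sub
      (continuous_const.mul (Real.continuous_cos.comp (continuous_const.mul continuous_id))))
  have hint2 : (∫ t in (0:ℝ)..T, (p t)^2)
      = (a/(1+ω^2))^2 * ((1+ω^2)*T/2) := by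
    rw [intervalIntegral.integral_eq_sub_of_hasDerivAt (fun t _ => F_deriv a ω hω t)
      ((hcp.pow 2).intervalIntegrable 0 T)]
    simp only [hωT, mul_zero, Real.sin_two_pi, Real.cos_two_pi, Real.sin_zero, Real.cos_zero]
    ring
  have hval : (1 / T) * (∫ t in (0:ℝ)..T, γ₁ t) = a ^ 2 / (2 * (1 + ω ^ 2)) := by
    rw [heq1, heq2, hint2]
    field_simp
  refine ⟨hval, ?_, ?_⟩
  · rw [hval]; positivity
  · intro δ₁ δ₂ hδ₁ hδ₂ hδ₁per hδ₂per
    have hδ₂0 : ∀ t, δ₂ t = 0 :=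
      decay_zero T hT δ₂ hδ₂ (by simpa using hδ₂per 0)
    have hδ₁0 : ∀ t, δ₁ t = 0 := by
      refine decay_zero T hT δ₁ ?_ (by simpa using hδ₁per 0)
      intro t
      have := hδ₁ t
      rw [hδ₂0 t] at this
      simpa using this
    exact fun t => ⟨hδ₁0 t, hδ₂0 t⟩
end
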